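/- arXiv:1211.1648 — 5 statements merged into one kernel-verified Lean document; each statement's English description precedes it below -/
import Mathlib

section
/- If the space Syz_{(0,1)} of bidegree (0,1) syzygies on p_0,…,p_3 is nonzero, then there exists a nonzero bihomogeneous polynomial p of bidegree (2,0) such that both p·u and p·v lie in U (so that I_U = ⟨pu, pv, p_2', p_3'⟩ for suitable p_2', p_3' ∈ U). -/
open MvPolynomial

noncomputable section

def biDeg (k : Type*) [CommRing k] (m n : ℕ) : Submodule k (MvPolynomial (Fin 4) k) where
  carrier := {p | ∀ d ∈ p.support, d 0 + d 1 = m ∧ d 2 + d 3 = n}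
  zero_mem' := by simp
  add_mem' := by
    intro p q hp hq d hd
    rcases Finset.mem_union.mp (MvPolynomial.support_add hd) with h | h
    · exact hp d h
    · exact hq d h
  smul_mem' := by
    intro c p hp d hd
    exact hp d (MvPolynomial.support_smul hd)

def syzMap {k : Type*} [CommRing k] (p : Fin 4 → MvPolynomial (Fin 4) k) :
    (Fin 4 → MvPolynomial (Fin 4) k) →ₗ[k] MvPolynomial (Fin 4) k where
  toFun ℓ := ∑ i, ℓ i * p i
  map_add' ℓ ℓ' := by simp [add_mul, Finset.sum_add_distrib]
  map_smul' c ℓ := by simp [smul_mul_assoc, Finset.smul_sum]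

def Syz {k : Type*} [CommRing k] (p : Fin 4 → MvPolynomial (Fin 4) k) (a b : ℕ) :
    Submodule k (Fin 4 → MvPolynomial (Fin 4) k) :=
  (Submodule.pi Set.univ fun _ => biDeg k a b) ⊓ LinearMap.ker (syzMap p)

/-! ### Auxiliary lemmas -/

lemma aux_X_dvd_iff_supp {k : Type*} [Field k] (i : Fin 4) (x : MvPolynomial (Fin 4) k) :
    X i ∣ x ↔ ∀ d ∈ x.support, d i ≠ 0 := by
  classical
  rw [X_dvd_iff_modMonomial_eq_zero]
  constructor
  · intro h d hd h0
    have hnle : ¬ Finsupp.single i 1 ≤ d := by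
      simp [Finsupp.single_le_iff, h0]
    have := coeff_modMonomial_of_not_le x hnle
    rw [h, coeff_zero] at this
    exact mem_support_iff.mp hd this.symm
  · intro h
    ext d
    by_cases hle : Finsupp.single i 1 ≤ d
    · simp [coeff_modMonomial_of_le x hle]
    · rw [coeff_modMonomial_of_not_le x hle, coeff_zero]
      by_contra hne
      exact hle (Finsupp.single_le_iff.mpr
        (Nat.one_le_iff_ne_zero.mpr (h d (mem_support_iff.mpr hne))))

lemma aux_biDeg01_eq {k : Type*} [Field k] {x : MvPolynomial (Fin 4) k} (hx : x ∈ biDeg k 0 1) :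
    x = C (coeff (Finsupp.single 2 1) x) * X 2 + C (coeff (Finsupp.single 3 1) x) * X 3 := by
  classical
  have hsupp : ∀ d : Fin 4 →₀ ℕ, d ∈ x.support →
      d = Finsupp.single 2 1 ∨ d = Finsupp.single 3 1 := by
    intro d hd
    obtain ⟨h1, h2⟩ := hx d hd
    have hcase : (d 2 = 1 ∧ d 3 = 0) ∨ (d 2 = 0 ∧ d 3 = 1) := by omega
    rcases hcase with ⟨h2', h3'⟩ | ⟨h2', h3'⟩
    · left; ext j; fin_cases j <;> simp_all [Finsupp.single_apply]
    · right; ext j; fin_cases j <;> simp_all [Finsupp.single_apply]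
  have hne : (Finsupp.single 2 1 : Fin 4 →₀ ℕ) ≠ Finsupp.single 3 1 := by
    intro h
    have := DFunLike.congr_fun h (2 : Fin 4)
    simp [Finsupp.single_apply] at this
  ext d
  rw [coeff_add, coeff_C_mul, coeff_C_mul, coeff_X', coeff_X']
  by_cases h2 : (Finsupp.single 2 1 : Fin 4 →₀ ℕ) = d
  · subst h2; rw [if_pos rfl, if_neg (fun h => hne h.symm)]; ring
  · by_cases h3 : (Finsupp.single 3 1 : Fin 4 →₀ ℕ) = d
    · subst h3; rw [if_pos rfl, if_neg h2]; ring
    · rw [if_neg h2, if_neg h3]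
      have : d ∉ x.support := fun hd => by
        rcases hsupp d hd with rfl | rfl
        exacts [h2 rfl, h3 rfl]
      rw [notMem_support_iff.mp this]; ring

lemma aux_range_pair {α : Type*} (x y : α) : Set.range ![x, y] = {x, y} := by
  ext z
  simp [Fin.exists_fin_two]
  tauto

lemma aux_ideal_span_eq_of_span_eq {k R : Type*} [Field k] [CommRing R] [Algebra k R]
    {S T : Set R} (h : Submodule.span k S = Submodule.span k T) :
    Ideal.span S = Ideal.span T := by
  have key : ∀ S T : Set R, Submodule.span k S ≤ Submodule.span k T →
      Ideal.span S ≤ Ideal.span T := by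
    intro S T hle
    rw [Ideal.span_le]
    intro x hx
    have h1 : x ∈ Submodule.span k T := hle (Submodule.subset_span hx)
    have h2 : Submodule.span k T ≤ (Ideal.span T).restrictScalars k :=
      Submodule.span_le.mpr fun y hy => Ideal.subset_span hy
    exact h2 h1
  exact le_antisymm (key _ _ h.le) (key _ _ h.ge)

/-- If Syz_{(0,1)} on p_0,…,p_3 is nonzero, then there is a nonzero
bihomogeneous p of bidegree (2,0) with p·u, p·v ∈ U, so that
I_U = ⟨pu, pv, p₂', p₃'⟩ for suitable p₂', p₃' ∈ U. -/
theorem statement0 {k : Type*} [Field k] [IsAlgClosed k]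
    (p : Fin 4 → MvPolynomial (Fin 4) k)
    (hli : LinearIndependent k p)
    (hdeg : ∀ i, p i ∈ biDeg k 2 1)
    (hsyz : Syz p 0 1 ≠ ⊥) :
    ∃ q : MvPolynomial (Fin 4) k, q ≠ 0 ∧ q ∈ biDeg k 2 0 ∧
      q * X 2 ∈ Submodule.span k (Set.range p) ∧
      q * X 3 ∈ Submodule.span k (Set.range p) ∧
      ∃ p₂ p₃ : MvPolynomial (Fin 4) k,
        p₂ ∈ Submodule.span k (Set.range p) ∧ p₃ ∈ Submodule.span k (Set.range p) ∧
        Ideal.span {q * X 2, q * X 3, p₂, p₃} = Ideal.span (Set.range p) := by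
  classical
  obtain ⟨ℓ, hℓ, hℓ0⟩ := (Submodule.ne_bot_iff _).mp hsyz
  obtain ⟨hdegℓ, hker⟩ := hℓ
  have hker' : ∑ i, ℓ i * p i = 0 := LinearMap.mem_ker.mp hker
  set a : Fin 4 → k := fun i => coeff (Finsupp.single 2 1) (ℓ i) with ha_def
  set b : Fin 4 → k := fun i => coeff (Finsupp.single 3 1) (ℓ i) with hb_def
  have hℓeq : ∀ i, ℓ i = C (a i) * X 2 + C (b i) * X 3 := fun i =>
    aux_biDeg01_eq (Submodule.mem_pi.mp hdegℓ i (Set.mem_univ i))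
  set A : MvPolynomial (Fin 4) k := ∑ i, a i • p i with hA_def
  set B : MvPolynomial (Fin 4) k := ∑ i, b i • p i with hB_def
  have hAB : A * X 2 + B * X 3 = 0 := by
    rw [hA_def, hB_def, Finset.sum_mul, Finset.sum_mul, ← Finset.sum_add_distrib, ← hker']
    apply Finset.sum_congr rfl
    intro i _
    rw [hℓeq i, smul_eq_C_mul, smul_eq_C_mul]
    ring
  -- X 3 divides A
  have hdvd : X 3 ∣ A := by
    have h1 : X (3 : Fin 4) ∣ A * X 2 := ⟨-B, by linear_combination hAB⟩
    rw [aux_X_dvd_iff_supp] at h1 ⊢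
    intro d hd
    have hmem : d + Finsupp.single 2 1 ∈ (A * X 2).support := by
      rw [support_mul_X]
      exact Finset.mem_map.mpr ⟨d, hd, rfl⟩
    have := h1 _ hmem
    simpa [Finsupp.single_apply] using this
  obtain ⟨q, hq⟩ := hdvd
  have hX3 : (X 3 : MvPolynomial (Fin 4) k) ≠ 0 := X_ne_zero 3
  have hB : B = -(q * X 2) := by
    apply mul_right_cancel₀ hX3
    linear_combination hAB - X 2 * hq
  have hqX3 : q * X 3 = A := by rw [mul_comm]; exact hq.symm
  have hqX2 : q * X 2 = ∑ i, (-b i) • p i := by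
    have : q * X 2 = -B := by rw [hB]; ring
    rw [this, hB_def, ← Finset.sum_neg_distrib]
    apply Finset.sum_congr rfl
    intro i _
    rw [neg_smul]
  -- q ≠ 0
  have hqne : q ≠ 0 := by
    rintro rfl
    have hA0 : A = 0 := by rw [hq]; ring
    have hB0 : B = 0 := by rw [hB]; ring
    have ha0 : ∀ i, a i = 0 := Fintype.linearIndependent_iff.mp hli a (by rw [← hA_def]; exact hA0)
    have hb0 : ∀ i, b i = 0 := Fintype.linearIndependent_iff.mp hli b (by rw [← hB_def]; exact hB0)
    apply hℓ0
    funext i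
    rw [hℓeq i, ha0 i, hb0 i]
    simp
  -- q has bidegree (2,0)
  have hqdeg : q ∈ biDeg k 2 0 := by
    have hA : A ∈ biDeg k 2 1 :=
      Submodule.sum_mem _ fun i _ => Submodule.smul_mem _ _ (hdeg i)
    intro d hd
    have hmem : Finsupp.single 3 1 + d ∈ A.support := by
      rw [hq, support_X_mul]
      exact Finset.mem_map.mpr ⟨d, hd, rfl⟩
    obtain ⟨h1, h2⟩ := hA _ hmem
    simp [Finsupp.single_apply] at h1 h2
    omega
  -- membership of q * X 2 and q * X 3 in the span
  have hmemX2 : q * X 2 ∈ Submodule.span k (Set.range p) := by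
    rw [hqX2]
    exact Submodule.sum_mem _ fun i _ =>
      Submodule.smul_mem _ _ (Submodule.subset_span (Set.mem_range_self i))
  have hmemX3 : q * X 3 ∈ Submodule.span k (Set.range p) := by
    rw [hqX3, hA_def]
    exact Submodule.sum_mem _ fun i _ =>
      Submodule.smul_mem _ _ (Submodule.subset_span (Set.mem_range_self i))
  refine ⟨q, hqne, hqdeg, hmemX2, hmemX3, ?_⟩
  -- now the ideal part
  set Φ : (Fin 4 → k) →ₗ[k] MvPolynomial (Fin 4) k := Fintype.linearCombination k p with hΦ_def
  have hΦa : Φ a = q * X 3 := by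
    rw [hqX3, hA_def]; rfl
  have hΦb : Φ (-b) = q * X 2 := by
    rw [hqX2]; rfl
  -- linear independence of (q * X 2, q * X 3)
  have hindQ : LinearIndependent k ![q * X 2, q * X 3] := by
    rw [linearIndependent_fin2]
    constructor
    · simp only [Matrix.cons_val_one, Matrix.head_cons]
      exact mul_ne_zero hqne hX3
    · intro c hc
      simp only [Matrix.cons_val_one, Matrix.head_cons, Matrix.cons_val_zero] at hc
      have h0 : q * (C c * X 3 - X 2) = 0 := by
        rw [smul_eq_C_mul] at hc
        linear_combination hc
      rcases mul_eq_zero.mp h0 with h | h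
      · exact hqne h
      · have h2 := congrArg (coeff (Finsupp.single 2 1)) h
        have hne : (Finsupp.single 2 1 : Fin 4 →₀ ℕ) ≠ Finsupp.single 3 1 := by
          intro h
          have := DFunLike.congr_fun h (2 : Fin 4)
          simp [Finsupp.single_apply] at this
        rw [coeff_sub, coeff_C_mul, coeff_X', coeff_X', if_neg (fun hh => hne hh.symm),
          if_pos rfl, coeff_zero] at h2
        simp at h2
  -- the corresponding coefficient vectors are independent
  have hcomp : Φ ∘ ![(-b), a] = ![q * X 2, q * X 3] := by
    funext i
    fin_cases i <;> simp [hΦb, hΦa]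
  have hindV : LinearIndependent k ![(-b), a] := by
    apply LinearIndependent.of_comp Φ
    rw [hcomp]
    exact hindQ
  -- extend to a spanning set of k^4
  set W : Submodule k (Fin 4 → k) := Submodule.span k (Set.range ![(-b), a]) with hW_def
  obtain ⟨W', hW'⟩ := Submodule.exists_isCompl W
  have hfrW : Module.finrank k W = 2 := by
    rw [hW_def, finrank_span_eq_card hindV]
    simp
  have hfrV : Module.finrank k (Fin 4 → k) = 4 := Module.finrank_fin_fun k
  have hfrW' : Module.finrank k W' = 2 := by
    have := Submodule.finrank_add_eq_of_isCompl hW'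
    omega
  set bas : Module.Basis (Fin 2) k W' := Module.finBasisOfFinrankEq k W' hfrW' with hbas_def
  set c : Fin 4 → k := (bas 0 : Fin 4 → k) with hc_def
  set d : Fin 4 → k := (bas 1 : Fin 4 → k) with hd_def
  have hspanW' : Submodule.span k {c, d} = W' := by
    have h1 : Submodule.span k (Set.range (W'.subtype ∘ bas)) = W' := by
      rw [Set.range_comp, ← Submodule.map_span, bas.span_eq, Submodule.map_subtype_top]
    rw [← h1]
    congr 1
    rw [show W'.subtype ∘ bas = ![c, d] from funext fun i => by fin_cases i <;> rfl]
    rw [aux_range_pair]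
  -- the family over Fin 2 ⊕ Fin 2
  set g : Fin 2 ⊕ Fin 2 → (Fin 4 → k) := Sum.elim ![(-b), a] ![c, d] with hg_def
  have hspan_g : Submodule.span k (Set.range g) = ⊤ := by
    rw [hg_def, Set.Sum.elim_range, Submodule.span_union, aux_range_pair c d, hspanW',
      ← hW_def, hW'.sup_eq_top]
  set p₂ : MvPolynomial (Fin 4) k := Φ c with hp2_def
  set p₃ : MvPolynomial (Fin 4) k := Φ d with hp3_def
  have hrangeΦ : LinearMap.range Φ = Submodule.span k (Set.range p) :=
    Fintype.range_linearCombination k p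
  have hmem2 : p₂ ∈ Submodule.span k (Set.range p) := by
    rw [← hrangeΦ]; exact LinearMap.mem_range_self Φ c
  have hmem3 : p₃ ∈ Submodule.span k (Set.range p) := by
    rw [← hrangeΦ]; exact LinearMap.mem_range_self Φ d
  refine ⟨p₂, p₃, hmem2, hmem3, ?_⟩
  apply aux_ideal_span_eq_of_span_eq (k := k)
  have himg : {q * X 2, q * X 3, p₂, p₃} = Φ '' (Set.range g) := by
    rw [← Set.range_comp]
    ext x
    constructor
    · intro hx
      simp only [Set.mem_insert_iff, Set.mem_singleton_iff] at hx
      rcases hx with rfl | rfl | rfl | rfl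
      · exact ⟨Sum.inl 0, by simp [hg_def, hΦb]⟩
      · exact ⟨Sum.inl 1, by simp [hg_def, hΦa]⟩
      · exact ⟨Sum.inr 0, by simp [hg_def, hp2_def]⟩
      · exact ⟨Sum.inr 1, by simp [hg_def, hp3_def]⟩
    · rintro ⟨i, rfl⟩
      rcases i with i | i <;> fin_cases i <;>
        simp [hg_def, hΦb, hΦa, hp2_def, hp3_def]
  rw [himg, Submodule.span_image, hspan_g, Submodule.map_top, hrangeΦ]
end
end

section
/- If the space Syz_{(1,0)} of bidegree (1,0) syzygies on p_0,…,p_3 is nonzero, then there exists a nonzero bihomogeneous polynomial p of bidegree (1,1) such that both p·s and p·t lie in U (so that I_U = ⟨ps, pt, p_2', p_3'⟩ for suitable p_2', p_3' ∈ U). -/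
open MvPolynomial

noncomputable section

section Aux

variable {k : Type*} [Field k]

lemma aux_deg10 (d : Fin 4 →₀ ℕ) (h1 : d 0 + d 1 = 1) (h2 : d 2 + d 3 = 0) :
    d = Finsupp.single 0 1 ∨ d = Finsupp.single 1 1 := by
  by_cases h : d 0 = 1
  · left
    ext i
    fin_cases i
    · show d 0 = (Finsupp.single (0 : Fin 4) 1) 0
      rw [Finsupp.single_eq_same]; omega
    · show d 1 = (Finsupp.single (0 : Fin 4) 1) 1
      rw [Finsupp.single_eq_of_ne (by decide)]; omega
    · show d 2 = (Finsupp.single (0 : Fin 4) 1) 2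
      rw [Finsupp.single_eq_of_ne (by decide)]; omega
    · show d 3 = (Finsupp.single (0 : Fin 4) 1) 3
      rw [Finsupp.single_eq_of_ne (by decide)]; omega
  · right
    ext i
    fin_cases i
    · show d 0 = (Finsupp.single (1 : Fin 4) 1) 0
      rw [Finsupp.single_eq_of_ne (by decide)]; omega
    · show d 1 = (Finsupp.single (1 : Fin 4) 1) 1
      rw [Finsupp.single_eq_same]; omega
    · show d 2 = (Finsupp.single (1 : Fin 4) 1) 2
      rw [Finsupp.single_eq_of_ne (by decide)]; omega
    · show d 3 = (Finsupp.single (1 : Fin 4) 1) 3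
      rw [Finsupp.single_eq_of_ne (by decide)]; omega

lemma aux_biDeg10_eq {p : MvPolynomial (Fin 4) k} (hp : p ∈ biDeg k 1 0) :
    p = coeff (Finsupp.single 0 1) p • X 0 + coeff (Finsupp.single 1 1) p • X 1 := by
  apply MvPolynomial.ext
  intro d
  rw [coeff_add, coeff_smul, coeff_smul, coeff_X', coeff_X']
  by_cases h0 : (Finsupp.single 0 1 : Fin 4 →₀ ℕ) = d
  · have hne : (Finsupp.single 1 1 : Fin 4 →₀ ℕ) ≠ d := by
      rw [← h0]
      intro h
      have := DFunLike.congr_fun h 0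
      simp [Finsupp.single_apply] at this
    rw [if_pos h0, if_neg hne, ← h0]
    simp
  · by_cases h1 : (Finsupp.single 1 1 : Fin 4 →₀ ℕ) = d
    · rw [if_pos h1, if_neg h0, ← h1]
      simp
    · rw [if_neg h0, if_neg h1]
      by_cases hd : d ∈ p.support
      · obtain ⟨hd1, hd2⟩ := hp d hd
        rcases aux_deg10 d hd1 hd2 with h | h
        · exact absurd h.symm h0
        · exact absurd h.symm h1
      · rw [MvPolynomial.notMem_support_iff.mp hd]
        simp

lemma aux_X_dvd {A : MvPolynomial (Fin 4) k} {i : Fin 4}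
    (h : ∀ d : Fin 4 →₀ ℕ, d i = 0 → coeff d A = 0) : X i ∣ A := by
  rw [MvPolynomial.X_dvd_iff_modMonomial_eq_zero]
  apply MvPolynomial.ext
  intro d
  rw [coeff_zero]
  by_cases hle : Finsupp.single i 1 ≤ d
  · exact MvPolynomial.coeff_modMonomial_of_le A hle
  · rw [MvPolynomial.coeff_modMonomial_of_not_le A hle]
    apply h
    rw [Finsupp.single_le_iff] at hle
    omega

lemma aux_biDeg11 {q : MvPolynomial (Fin 4) k} (h : X 1 * q ∈ biDeg k 2 1) :
    q ∈ biDeg k 1 1 := by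
  intro d hd
  have hmem : Finsupp.single 1 1 + d ∈ (X 1 * q).support := by
    rw [MvPolynomial.mem_support_iff, coeff_X_mul]
    exact MvPolynomial.mem_support_iff.mp hd
  have := h _ hmem
  simp only [Finsupp.add_apply] at this
  rw [Finsupp.single_eq_of_ne (by decide), Finsupp.single_eq_same,
    Finsupp.single_eq_of_ne (by decide), Finsupp.single_eq_of_ne (by decide)] at this
  omega

lemma aux_ideal_span_span (S : Set (MvPolynomial (Fin 4) k)) :
    Ideal.span ((Submodule.span k S : Submodule k (MvPolynomial (Fin 4) k)) : Set _)
      = Ideal.span S := by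
  apply le_antisymm
  · rw [Ideal.span_le]
    have : Submodule.span k S ≤ (Ideal.span S).restrictScalars k :=
      Submodule.span_le.mpr Ideal.subset_span
    exact this
  · exact Ideal.span_mono Submodule.subset_span

end Aux

/-- If Syz_{(1,0)} on p_0,…,p_3 is nonzero, then there is a nonzero
bihomogeneous p of bidegree (1,1) with p·s, p·t ∈ U, so that
I_U = ⟨ps, pt, p₂', p₃'⟩ for suitable p₂', p₃' ∈ U. -/
theorem statement1 {k : Type*} [Field k] [IsAlgClosed k]
    (p : Fin 4 → MvPolynomial (Fin 4) k)
    (hli : LinearIndependent k p)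
    (hdeg : ∀ i, p i ∈ biDeg k 2 1)
    (hsyz : Syz p 1 0 ≠ ⊥) :
    ∃ q : MvPolynomial (Fin 4) k, q ≠ 0 ∧ q ∈ biDeg k 1 1 ∧
      q * X 0 ∈ Submodule.span k (Set.range p) ∧
      q * X 1 ∈ Submodule.span k (Set.range p) ∧
      ∃ p₂ p₃ : MvPolynomial (Fin 4) k,
        p₂ ∈ Submodule.span k (Set.range p) ∧ p₃ ∈ Submodule.span k (Set.range p) ∧
        Ideal.span {q * X 0, q * X 1, p₂, p₃} = Ideal.span (Set.range p) := by
  classical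
  obtain ⟨ℓ, hℓmem, hℓne⟩ := Submodule.exists_mem_ne_zero_of_ne_bot hsyz
  obtain ⟨hℓpi, hℓker⟩ := Submodule.mem_inf.mp hℓmem
  have hℓdeg : ∀ i, ℓ i ∈ biDeg k 1 0 := fun i =>
    Submodule.mem_pi.mp hℓpi i (Set.mem_univ i)
  have hℓ0 : ∑ i, ℓ i * p i = 0 := hℓker
  set a : Fin 4 → k := fun i => coeff (Finsupp.single 0 1) (ℓ i) with ha_def
  set b : Fin 4 → k := fun i => coeff (Finsupp.single 1 1) (ℓ i) with hb_def
  set A : MvPolynomial (Fin 4) k := ∑ i, a i • p i with hA_def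
  set B : MvPolynomial (Fin 4) k := ∑ i, b i • p i with hB_def
  have hAmem : A ∈ biDeg k 2 1 :=
    Submodule.sum_mem _ fun i _ => Submodule.smul_mem _ _ (hdeg i)
  have hAspan : A ∈ Submodule.span k (Set.range p) :=
    Submodule.sum_mem _ fun i _ =>
      Submodule.smul_mem _ _ (Submodule.subset_span (Set.mem_range_self i))
  have hBspan : B ∈ Submodule.span k (Set.range p) :=
    Submodule.sum_mem _ fun i _ =>
      Submodule.smul_mem _ _ (Submodule.subset_span (Set.mem_range_self i))
  have key : X 0 * A + X 1 * B = 0 := by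
    rw [hA_def, hB_def, Finset.mul_sum, Finset.mul_sum, ← Finset.sum_add_distrib, ← hℓ0]
    refine Finset.sum_congr rfl fun i _ => ?_
    conv_rhs => rw [aux_biDeg10_eq (hℓdeg i)]
    rw [add_mul, smul_mul_assoc, smul_mul_assoc, mul_smul_comm, mul_smul_comm]
  have hdvd : X 1 ∣ A := by
    apply aux_X_dvd
    intro d hd1
    have h0 : X 0 * A = -(X 1 * B) := by linear_combination key
    have := congrArg (coeff (Finsupp.single 0 1 + d)) h0
    rw [coeff_X_mul, coeff_neg, coeff_X_mul'] at this
    rw [this]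
    have : (1 : Fin 4) ∉ (Finsupp.single (0 : Fin 4) 1 + d).support := by
      simp only [Finsupp.mem_support_iff, Finsupp.add_apply, ne_eq, not_not]
      rw [Finsupp.single_eq_of_ne' (by decide : (0:Fin 4) ≠ 1)]
      omega
    simp [this]
  obtain ⟨q, hq⟩ := hdvd
  have hBq : B = -(X 0 * q) := by
    have h1 : X 1 * (X 0 * q + B) = 0 := by
      rw [mul_add, ← mul_assoc, mul_comm (X 1) (X 0), mul_assoc, ← hq]
      exact key
    rcases mul_eq_zero.mp h1 with h | h
    · exact absurd h (MvPolynomial.X_ne_zero 1)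
    · linear_combination h
  have hqne : q ≠ 0 := by
    rintro rfl
    rw [mul_zero] at hq
    rw [mul_zero, neg_zero] at hBq
    have haz : ∀ i, a i = 0 := Fintype.linearIndependent_iff.mp hli a (by rw [← hA_def, hq])
    have hbz : ∀ i, b i = 0 := Fintype.linearIndependent_iff.mp hli b (by rw [← hB_def, hBq])
    apply hℓne
    funext i
    rw [aux_biDeg10_eq (hℓdeg i)]
    show a i • X 0 + b i • X 1 = 0
    rw [haz i, hbz i, zero_smul, zero_smul, add_zero]
  have hq11 : q ∈ biDeg k 1 1 := aux_biDeg11 (hq ▸ hAmem)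
  have hqX1 : q * X 1 = A := by rw [mul_comm, ← hq]
  have hqX0 : q * X 0 = -B := by rw [hBq, neg_neg, mul_comm]
  have hqX0span : q * X 0 ∈ Submodule.span k (Set.range p) := by
    rw [hqX0]; exact Submodule.neg_mem _ hBspan
  have hqX1span : q * X 1 ∈ Submodule.span k (Set.range p) := by
    rw [hqX1]; exact hAspan
  refine ⟨q, hqne, hq11, hqX0span, hqX1span, ?_⟩
  -- extend {q * X 0, q * X 1} to a spanning set of U
  set U : Submodule k (MvPolynomial (Fin 4) k) := Submodule.span k (Set.range p) with hU_def
  haveI : FiniteDimensional k U := FiniteDimensional.span_of_finite k (Set.finite_range p)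
  have hU4 : Module.finrank k U = 4 := by
    rw [finrank_span_eq_card hli, Fintype.card_fin]
  have hX01 : (X 0 : MvPolynomial (Fin 4) k) ≠ X 1 := by
    intro h
    have := congrArg (coeff (Finsupp.single 0 1)) h
    rw [coeff_X', coeff_X'] at this
    rw [if_pos rfl, if_neg] at this
    · exact one_ne_zero this
    · intro hcon
      have := DFunLike.congr_fun hcon 0
      simp [Finsupp.single_apply] at this
  have hne01 : q * X 0 ≠ q * X 1 := by
    intro h
    exact hX01 (mul_left_cancel₀ hqne h)
  have hx0ne : q * X 0 ≠ 0 := mul_ne_zero hqne (MvPolynomial.X_ne_zero 0)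
  have hpairli : LinearIndependent k
      ((↑) : ({q * X 0, q * X 1} : Set (MvPolynomial (Fin 4) k)) → MvPolynomial (Fin 4) k) := by
    apply linearIndepOn_id_pair hx0ne
    intro c hc
    have h1 : q * (c • X 0 - X 1) = 0 := by
      rw [mul_sub, mul_smul_comm]
      rw [← hc]
      ring
    rcases mul_eq_zero.mp h1 with h | h
    · exact hqne h
    · have h2 : c • (X 0 : MvPolynomial (Fin 4) k) = X 1 := by linear_combination h
      have := congrArg (coeff (Finsupp.single 1 1)) h2
      rw [coeff_smul, coeff_X', coeff_X'] at this
      rw [if_pos rfl, if_neg] at this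
      · simp at this
      · intro hcon
        have := DFunLike.congr_fun hcon 0
        simp [Finsupp.single_apply] at this
  have hsub : ({q * X 0, q * X 1} : Set (MvPolynomial (Fin 4) k)) ⊆ ↑U := by
    rintro x (rfl | rfl)
    · exact hqX0span
    · exact hqX1span
  obtain ⟨c, hct, hsc, htc, hcli⟩ := exists_linearIndepOn_id_extension hpairli hsub
  have hspanc : Submodule.span k c = U := by
    apply le_antisymm
    · rw [Submodule.span_le]; exact hct
    · rw [hU_def, Submodule.span_le]
      exact fun x hx => htc (Submodule.subset_span hx)
  -- c is finite of cardinality 4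
  have hcliU : LinearIndependent k (fun x : c => (⟨x.1, hct x.2⟩ : U)) := by
    apply LinearIndependent.of_comp U.subtype
    exact hcli
  haveI hfinc : Finite c := hcliU.finite_of_isNoetherian
  have hcfin : c.Finite := c.toFinite
  haveI : Fintype c := hcfin.fintype
  have hcard : c.toFinset.card = 4 := by
    have := finrank_span_set_eq_card (s := c) hcli
    rw [hspanc, hU4] at this
    omega
  have hncard : c.ncard = 4 := by
    rw [Set.ncard_eq_toFinset_card' c, hcard]
  have hsncard : ({q * X 0, q * X 1} : Set (MvPolynomial (Fin 4) k)).ncard = 2 := by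
    rw [Set.ncard_pair hne01]
  have hdiff : (c \ {q * X 0, q * X 1}).ncard = 2 := by
    rw [Set.ncard_diff hsc, hncard, hsncard]
  obtain ⟨x, y, hxy, hxyeq⟩ := Set.ncard_eq_two.mp hdiff
  have hxU : x ∈ U := hct (by rw [← Set.diff_union_of_subset hsc, hxyeq]; left; left; rfl)
  have hyU : y ∈ U := hct (by rw [← Set.diff_union_of_subset hsc, hxyeq]; left; right; rfl)
  refine ⟨x, y, hxU, hyU, ?_⟩
  have hceq : c = ({q * X 0, q * X 1, x, y} : Set (MvPolynomial (Fin 4) k)) := by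
    rw [← Set.union_diff_cancel hsc, hxyeq, Set.insert_union, Set.singleton_union]
  calc Ideal.span ({q * X 0, q * X 1, x, y} : Set (MvPolynomial (Fin 4) k))
      = Ideal.span c := by rw [hceq]
    _ = Ideal.span ((Submodule.span k c : Submodule k _) : Set _) :=
        (aux_ideal_span_span c).symm
    _ = Ideal.span (U : Set _) := by rw [hspanc]
    _ = Ideal.span (Set.range p) := aux_ideal_span_span _

end
end

section
/- If U is basepoint free, then the spaces Syz_{(0,1)} and Syz_{(1,0)} cannot both be nonzero; that is, I_U cannot have first syzygies of both bidegree (0,1) and bidegree (1,0). -/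
open MvPolynomial

noncomputable section

namespace St2Aux

variable {k : Type*} [Field k]

/-! ### Scalar lemmas -/

lemma solve22 {x y x' y' m₀ m₁ : k} (hd : x*y' - x'*y ≠ 0)
    (h1 : m₀*x + m₁*x' = 0) (h2 : m₀*y + m₁*y' = 0) : m₀ = 0 ∧ m₁ = 0 := by
  constructor
  · have h : m₀ * (x*y' - x'*y) = 0 := by linear_combination y' * h1 - x' * h2
    rcases mul_eq_zero.mp h with h | h
    · exact h
    · exact absurd h hd
  · have h : m₁ * (x*y' - x'*y) = 0 := by linear_combination x * h2 - y * h1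
    rcases mul_eq_zero.mp h with h | h
    · exact h
    · exact absurd h hd

lemma kernel22 {x y x' y' : k} (hd : x*y' - x'*y = 0) :
    ∃ u v : k, (u ≠ 0 ∨ v ≠ 0) ∧ x*u + y*v = 0 ∧ x'*u + y'*v = 0 := by
  by_cases hx : x = 0 ∧ y = 0
  · by_cases hx' : x' = 0 ∧ y' = 0
    · exact ⟨1, 0, Or.inl one_ne_zero, by simp [hx.1, hx.2], by simp [hx'.1, hx'.2]⟩
    · refine ⟨y', -x', ?_, by rw [hx.1, hx.2]; ring, by ring⟩
      rcases (not_and_or.mp hx') with h | h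
      · exact Or.inr (by simpa using h)
      · exact Or.inl h
  · refine ⟨y, -x, ?_, by ring, by linear_combination -hd⟩
    rcases (not_and_or.mp hx) with h | h
    · exact Or.inr (by simpa using h)
    · exact Or.inl h

lemma propOf {x y pp q : k} (h : x*q - y*pp = 0) (hpq : ¬(pp = 0 ∧ q = 0)) :
    ∃ μ : k, x = μ*pp ∧ y = μ*q := by
  by_cases hp : pp = 0
  · have hq : q ≠ 0 := fun hq => hpq ⟨hp, hq⟩
    refine ⟨y / q, ?_, by field_simp⟩
    rw [hp, mul_zero]
    have : x * q = 0 := by linear_combination h + y * hp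
    rcases mul_eq_zero.mp this with h | h
    · exact h
    · exact absurd h hq
  · refine ⟨x / pp, by field_simp, ?_⟩
    field_simp
    linear_combination -h

lemma quadFactor [IsAlgClosed k] {w2 w1 w0 : k} (h : ¬(w2 = 0 ∧ w1 = 0 ∧ w0 = 0)) :
    ∃ p1 q1 p2 q2 : k, ¬(p1 = 0 ∧ q1 = 0) ∧ ¬(p2 = 0 ∧ q2 = 0) ∧
      w2 = p1*p2 ∧ w1 = p1*q2 + p2*q1 ∧ w0 = q1*q2 := by
  by_cases h2 : w2 = 0
  · refine ⟨0, 1, w1, w0, by simp, ?_, by simp [h2], by ring, by ring⟩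
    intro ⟨ha, hb⟩; exact h ⟨h2, ha, hb⟩
  · have hr : ∃ r : k, w2 * r^2 + w1 * r + w0 = 0 := by
      have hdeg : (Polynomial.C w2 * Polynomial.X ^ 2 + Polynomial.C w1 * Polynomial.X +
          Polynomial.C w0).degree = 2 := by
        compute_degree!
      obtain ⟨r, hroot⟩ := IsAlgClosed.exists_root (p := Polynomial.C w2 * Polynomial.X ^ 2 +
        Polynomial.C w1 * Polynomial.X + Polynomial.C w0) (by rw [hdeg]; exact two_ne_zero)
      refine ⟨r, ?_⟩
      have := hroot
      simp [Polynomial.IsRoot, Polynomial.eval_add, Polynomial.eval_mul] at this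
      linear_combination this
    obtain ⟨r, hroot⟩ := hr
    refine ⟨1, -r, w2, w1 + w2*r, by simp, fun ⟨ha, _⟩ => h2 ha, by ring, by ring, by
      linear_combination hroot⟩

/-! ### Monomial / Finsupp helpers -/

lemma mem_biDeg {f : MvPolynomial (Fin 4) k} {m n : ℕ} :
    f ∈ biDeg k m n ↔ ∀ d ∈ f.support, d 0 + d 1 = m ∧ d 2 + d 3 = n := Iff.rfl

lemma ext4 {d e : Fin 4 →₀ ℕ} (h0 : d 0 = e 0) (h1 : d 1 = e 1) (h2 : d 2 = e 2)
    (h3 : d 3 = e 3) : d = e := by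
  ext j
  fin_cases j <;> assumption

lemma CX (a : k) (i : Fin 4) : C a * X i = monomial (Finsupp.single i 1) a := by
  rw [X, C_apply, monomial_mul, zero_add, mul_one]

lemma CXX (a : k) (i j : Fin 4) :
    C a * (X i * X j) = monomial (Finsupp.single i 1 + Finsupp.single j 1) a := by
  rw [X, X, C_apply, monomial_mul, monomial_mul, zero_add, mul_one, mul_one]

lemma XX (i j : Fin 4) :
    (X i * X j : MvPolynomial (Fin 4) k)
      = monomial (Finsupp.single i 1 + Finsupp.single j 1) 1 := by
  rw [← one_mul (X i * X j), ← map_one (C (σ := Fin 4) (R := k)), CXX]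

lemma lin_eq_zero {a b : k} {i j : Fin 4} (hij : i ≠ j) (h : C a * X i + C b * X j = 0) :
    a = 0 ∧ b = 0 := by
  have hne : ¬ (Finsupp.single j 1 = Finsupp.single i (1:ℕ)) := by
    intro hc
    rcases (Finsupp.single_eq_single_iff _ _ _ _).mp hc with ⟨hji, -⟩ | ⟨h10, -⟩
    · exact hij hji.symm
    · exact one_ne_zero h10
  have hne' : ¬ (Finsupp.single i 1 = Finsupp.single j (1:ℕ)) := by
    intro hc
    rcases (Finsupp.single_eq_single_iff _ _ _ _).mp hc with ⟨hji, -⟩ | ⟨h10, -⟩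
    · exact hij hji
    · exact one_ne_zero h10
  constructor
  · have hca := congrArg (coeff (Finsupp.single i 1)) h
    rw [coeff_add, CX, CX, coeff_monomial, coeff_monomial, if_pos rfl, if_neg hne,
      coeff_zero, add_zero] at hca
    exact hca
  · have hcb := congrArg (coeff (Finsupp.single j 1)) h
    rw [coeff_add, CX, CX, coeff_monomial, coeff_monomial, if_pos rfl, if_neg hne',
      coeff_zero, zero_add] at hcb
    exact hcb

/-! ### Structure of bihomogeneous polynomials of low degree -/

lemma repL01 {f : MvPolynomial (Fin 4) k} (hf : f ∈ biDeg k 0 1) :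
    f = C (coeff (Finsupp.single 2 1) f) * X 2 + C (coeff (Finsupp.single 3 1) f) * X 3 := by
  rw [CX, CX]
  ext d
  rw [coeff_add, coeff_monomial, coeff_monomial]
  by_cases hd : d ∈ f.support
  · obtain ⟨h01, h23⟩ := hf d hd
    rcases (by omega : (d 2 = 1 ∧ d 3 = 0) ∨ (d 2 = 0 ∧ d 3 = 1)) with ⟨h2', h3'⟩ | ⟨h2', h3'⟩
    · have hds : Finsupp.single (2 : Fin 4) 1 = d := by
        refine (ext4 ?_ ?_ ?_ ?_).symm <;> simp [Finsupp.single_apply] <;> omega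
      have hds' : ¬ (Finsupp.single (3 : Fin 4) 1 = d) := by
        intro hc
        rw [← hc] at h3'
        simp [Finsupp.single_apply] at h3'
      rw [if_pos hds, if_neg hds', hds]
      ring
    · have hds : Finsupp.single (3 : Fin 4) 1 = d := by
        refine (ext4 ?_ ?_ ?_ ?_).symm <;> simp [Finsupp.single_apply] <;> omega
      have hds' : ¬ (Finsupp.single (2 : Fin 4) 1 = d) := by
        intro hc
        rw [← hc] at h2'
        simp [Finsupp.single_apply] at h2'
      rw [if_pos hds, if_neg hds', hds]
      ring
  · rw [notMem_support_iff] at hd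
    split_ifs with h1 h2 h2
    · subst h1
      have := DFunLike.congr_fun h2 3
      simp [Finsupp.single_apply] at this
    · subst h1; rw [hd]; ring
    · subst h2; rw [hd]; ring
    · rw [hd]; ring

lemma repL10 {f : MvPolynomial (Fin 4) k} (hf : f ∈ biDeg k 1 0) :
    f = C (coeff (Finsupp.single 0 1) f) * X 0 + C (coeff (Finsupp.single 1 1) f) * X 1 := by
  rw [CX, CX]
  ext d
  rw [coeff_add, coeff_monomial, coeff_monomial]
  by_cases hd : d ∈ f.support
  · obtain ⟨h01, h23⟩ := hf d hd
    rcases (by omega : (d 0 = 1 ∧ d 1 = 0) ∨ (d 0 = 0 ∧ d 1 = 1)) with ⟨h0', h1'⟩ | ⟨h0', h1'⟩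
    · have hds : Finsupp.single (0 : Fin 4) 1 = d := by
        refine (ext4 ?_ ?_ ?_ ?_).symm <;> simp [Finsupp.single_apply] <;> omega
      have hds' : ¬ (Finsupp.single (1 : Fin 4) 1 = d) := by
        intro hc
        rw [← hc] at h1'
        simp [Finsupp.single_apply] at h1'
      rw [if_pos hds, if_neg hds', hds]
      ring
    · have hds : Finsupp.single (1 : Fin 4) 1 = d := by
        refine (ext4 ?_ ?_ ?_ ?_).symm <;> simp [Finsupp.single_apply] <;> omega
      have hds' : ¬ (Finsupp.single (0 : Fin 4) 1 = d) := by
        intro hc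
        rw [← hc] at h0'
        simp [Finsupp.single_apply] at h0'
      rw [if_pos hds, if_neg hds', hds]
      ring
  · rw [notMem_support_iff] at hd
    split_ifs with h1 h2 h2
    · subst h1
      have := DFunLike.congr_fun h2 1
      simp [Finsupp.single_apply] at this
    · subst h1; rw [hd]; ring
    · subst h2; rw [hd]; ring
    · rw [hd]; ring

lemma repL20 {f : MvPolynomial (Fin 4) k} (hf : f ∈ biDeg k 2 0) :
    f = C (coeff (Finsupp.single 0 2) f) * (X 0 * X 0)
      + C (coeff (Finsupp.single 0 1 + Finsupp.single 1 1) f) * (X 0 * X 1)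
      + C (coeff (Finsupp.single 1 2) f) * (X 1 * X 1) := by
  have e0 : Finsupp.single (0 : Fin 4) 1 + Finsupp.single (0 : Fin 4) 1
      = Finsupp.single (0 : Fin 4) 2 := by
    rw [← Finsupp.single_add]
  have e1 : Finsupp.single (1 : Fin 4) 1 + Finsupp.single (1 : Fin 4) 1
      = Finsupp.single (1 : Fin 4) 2 := by
    rw [← Finsupp.single_add]
  rw [CXX, CXX, CXX, e0, e1]
  ext d
  rw [coeff_add, coeff_add, coeff_monomial, coeff_monomial, coeff_monomial]
  by_cases hd : d ∈ f.support
  · obtain ⟨h01, h23⟩ := hf d hd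
    rcases (by omega : (d 0 = 2 ∧ d 1 = 0) ∨ (d 0 = 1 ∧ d 1 = 1) ∨ (d 0 = 0 ∧ d 1 = 2)) with
      ⟨h0', h1'⟩ | ⟨h0', h1'⟩ | ⟨h0', h1'⟩
    · have hds : Finsupp.single (0 : Fin 4) 2 = d := by
        refine (ext4 ?_ ?_ ?_ ?_).symm <;> simp [Finsupp.single_apply] <;> omega
      have hn1 : ¬ (Finsupp.single (0 : Fin 4) 1 + Finsupp.single (1 : Fin 4) 1 = d) := by
        intro hc
        rw [← hc] at h0'
        simp [Finsupp.add_apply, Finsupp.single_apply] at h0'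
      have hn2 : ¬ (Finsupp.single (1 : Fin 4) 2 = d) := by
        intro hc
        rw [← hc] at h0'
        simp [Finsupp.single_apply] at h0'
      rw [if_pos hds, if_neg hn1, if_neg hn2, hds]
      ring
    · have hds : Finsupp.single (0 : Fin 4) 1 + Finsupp.single (1 : Fin 4) 1 = d := by
        refine (ext4 ?_ ?_ ?_ ?_).symm <;>
          simp [Finsupp.add_apply, Finsupp.single_apply] <;> omega
      have hn1 : ¬ (Finsupp.single (0 : Fin 4) 2 = d) := by
        intro hc
        rw [← hc] at h0'
        simp [Finsupp.single_apply] at h0'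
      have hn2 : ¬ (Finsupp.single (1 : Fin 4) 2 = d) := by
        intro hc
        rw [← hc] at h0'
        simp [Finsupp.single_apply] at h0'
      rw [if_pos hds, if_neg hn1, if_neg hn2, hds]
      ring
    · have hds : Finsupp.single (1 : Fin 4) 2 = d := by
        refine (ext4 ?_ ?_ ?_ ?_).symm <;> simp [Finsupp.single_apply] <;> omega
      have hn1 : ¬ (Finsupp.single (0 : Fin 4) 2 = d) := by
        intro hc
        rw [← hc] at h0'
        simp [Finsupp.single_apply] at h0'
      have hn2 : ¬ (Finsupp.single (0 : Fin 4) 1 + Finsupp.single (1 : Fin 4) 1 = d) := by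
        intro hc
        rw [← hc] at h0'
        simp [Finsupp.add_apply, Finsupp.single_apply] at h0'
      rw [if_pos hds, if_neg hn1, if_neg hn2, hds]
      ring
  · rw [notMem_support_iff] at hd
    split_ifs with h1 h2 h3 h2 h3 h3 h3 <;> simp_all

/-! ### Polynomials in the first two variables only -/

def onlyST (f : MvPolynomial (Fin 4) k) : Prop := ∀ d ∈ f.support, d 2 = 0 ∧ d 3 = 0

lemma onlyST_of_biDeg {f : MvPolynomial (Fin 4) k} {m : ℕ} (hf : f ∈ biDeg k m 0) :
    onlyST f := by
  intro d hd
  have := (hf d hd).2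
  omega

lemma onlyST.mul {f g : MvPolynomial (Fin 4) k} (hf : onlyST f) (hg : onlyST g) :
    onlyST (f * g) := by
  intro d hd
  obtain ⟨a, ha, b, hb, rfl⟩ := Finset.mem_add.mp (MvPolynomial.support_mul f g hd)
  have h1 := hf a ha
  have h2 := hg b hb
  simp [Finsupp.add_apply, h1.1, h1.2, h2.1, h2.2]

lemma onlyST.add {f g : MvPolynomial (Fin 4) k} (hf : onlyST f) (hg : onlyST g) :
    onlyST (f + g) := by
  intro d hd
  rcases Finset.mem_union.mp (MvPolynomial.support_add hd) with h | h
  · exact hf d h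
  · exact hg d h

lemma onlyST.neg {f : MvPolynomial (Fin 4) k} (hf : onlyST f) : onlyST (-f) := by
  intro d hd
  exact hf d (by simpa using hd)

lemma onlyST.sub {f g : MvPolynomial (Fin 4) k} (hf : onlyST f) (hg : onlyST g) :
    onlyST (f - g) := by
  rw [sub_eq_add_neg]
  exact hf.add hg.neg

lemma onlyST.C_mul {f : MvPolynomial (Fin 4) k} (hf : onlyST f) (c : k) :
    onlyST (C c * f) := by
  intro d hd
  rw [C_mul'] at hd
  exact hf d (MvPolynomial.support_smul hd)

lemma onlyST.eval_congr {f : MvPolynomial (Fin 4) k} (hf : onlyST f) {z z' : Fin 4 → k}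
    (h0 : z 0 = z' 0) (h1 : z 1 = z' 1) : eval z f = eval z' f := by
  rw [eval_eq, eval_eq]
  refine Finset.sum_congr rfl fun d hd => ?_
  obtain ⟨h2, h3⟩ := hf d hd
  refine congrArg _ (Finset.prod_congr rfl fun i hi => ?_)
  rw [Finsupp.mem_support_iff] at hi
  fin_cases i <;> simp_all

lemma splitST {F G : MvPolynomial (Fin 4) k} (hF : onlyST F) (hG : onlyST G)
    (h : X 2 * F + X 3 * G = 0) : F = 0 ∧ G = 0 := by
  classical
  have hF0 : F = 0 := by
    by_contra hne
    obtain ⟨d, hd⟩ := ne_zero_iff.mp hne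
    have hdm : d ∈ F.support := mem_support_iff.mpr hd
    have h3 : d 3 = 0 := (hF d hdm).2
    have hz : coeff (Finsupp.single 2 1 + d) (X 2 * F + X 3 * G) = 0 := by rw [h]; simp
    rw [coeff_add, coeff_X_mul, coeff_X_mul'] at hz
    have h3' : (3 : Fin 4) ∉ (Finsupp.single (2 : Fin 4) 1 + d).support := by
      simp [Finsupp.add_apply, Finsupp.single_apply, h3]
    rw [if_neg h3', add_zero] at hz
    exact hd hz
  refine ⟨hF0, ?_⟩
  rw [hF0, mul_zero, zero_add] at h
  rcases mul_eq_zero.mp h with h' | h'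
  · exact absurd h' (X_ne_zero 3)
  · exact h'

lemma split2 {F G H : MvPolynomial (Fin 4) k} (hF : onlyST F) (hG : onlyST G)
    (hH : onlyST H)
    (h : (X 2 * X 2) * F + (X 2 * X 3) * G + (X 3 * X 3) * H = 0) :
    F = 0 ∧ G = 0 ∧ H = 0 := by
  classical
  have hF0 : F = 0 := by
    by_contra hne
    obtain ⟨d, hd⟩ := ne_zero_iff.mp hne
    have hdm : d ∈ F.support := mem_support_iff.mpr hd
    obtain ⟨h2, h3⟩ := hF d hdm
    have hz : coeff (Finsupp.single 2 2 + d)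
        ((X 2 * X 2) * F + (X 2 * X 3) * G + (X 3 * X 3) * H) = 0 := by
      rw [h]; simp
    have e22 : Finsupp.single (2 : Fin 4) 1 + Finsupp.single (2 : Fin 4) 1
        = Finsupp.single (2 : Fin 4) 2 := by rw [← Finsupp.single_add]
    have e33 : Finsupp.single (3 : Fin 4) 1 + Finsupp.single (3 : Fin 4) 1
        = Finsupp.single (3 : Fin 4) 2 := by rw [← Finsupp.single_add]
    rw [coeff_add, coeff_add, XX, XX, XX, e22, e33, coeff_monomial_mul',
      coeff_monomial_mul', coeff_monomial_mul'] at hz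
    rw [if_pos le_self_add, if_neg ?c1, if_neg ?c2, add_tsub_cancel_left, one_mul,
      add_zero, add_zero] at hz
    case c1 =>
      intro hle
      have := (Finsupp.le_def.mp hle) 3
      simp [Finsupp.add_apply, Finsupp.single_apply, h3] at this
    case c2 =>
      intro hle
      have := (Finsupp.le_def.mp hle) 3
      simp [Finsupp.add_apply, Finsupp.single_apply, h3] at this
    exact hd hz
  refine ⟨hF0, ?_⟩
  rw [hF0, mul_zero, zero_add] at h
  have h' : X 3 * (X 2 * G + X 3 * H) = 0 := by linear_combination h
  rcases mul_eq_zero.mp h' with h'' | h''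
  · exact absurd h'' (X_ne_zero 3)
  · exact splitST hG hH h''

/-- splitting a (m,1)-bihomogeneous polynomial into its u and v parts -/
lemma splitUV {f : MvPolynomial (Fin 4) k} {m : ℕ} (hf : f ∈ biDeg k m 1) :
    ∃ A B, A ∈ biDeg k m 0 ∧ B ∈ biDeg k m 0 ∧ f = X 2 * A + X 3 * B := by
  classical
  refine ⟨f.divMonomial (Finsupp.single 2 1), f.divMonomial (Finsupp.single 3 1), ?_, ?_, ?_⟩
  · intro d hd
    rw [support_divMonomial, Finset.mem_preimage] at hd
    have := hf _ hd
    simp [Finsupp.add_apply, Finsupp.single_apply] at this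
    omega
  · intro d hd
    rw [support_divMonomial, Finset.mem_preimage] at hd
    have := hf _ hd
    simp [Finsupp.add_apply, Finsupp.single_apply] at this
    omega
  · ext d
    rw [coeff_add, coeff_X_mul', coeff_X_mul']
    by_cases hd : d ∈ f.support
    · obtain ⟨h01, h23⟩ := hf d hd
      rcases (by omega : (d 2 ≠ 0 ∧ d 3 = 0) ∨ (d 2 = 0 ∧ d 3 ≠ 0)) with ⟨h2', h3'⟩ | ⟨h2', h3'⟩
      · rw [if_pos (by simpa [Finsupp.mem_support_iff] using h2'),
          if_neg (by simp [Finsupp.mem_support_iff, h3']), coeff_divMonomial, add_zero,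
          add_tsub_cancel_of_le (Finsupp.single_le_iff.mpr (by omega))]
      · rw [if_neg (by simp [Finsupp.mem_support_iff, h2']),
          if_pos (by simpa [Finsupp.mem_support_iff] using h3'), coeff_divMonomial, zero_add,
          add_tsub_cancel_of_le (Finsupp.single_le_iff.mpr (by omega))]
    · rw [notMem_support_iff] at hd
      rw [hd]
      have e2 : ∀ (i : Fin 4), d i ≠ 0 →
          coeff (Finsupp.single i 1 + (d - Finsupp.single i 1)) f = 0 := by
        intro i hi
        rw [add_tsub_cancel_of_le (Finsupp.single_le_iff.mpr (by omega)), hd]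
      split_ifs with h1 h2 h2 <;>
        simp_all [coeff_divMonomial, Finsupp.mem_support_iff, e2]

/-! ### Index bookkeeping on `Fin 4` -/

lemma sum4 {M : Type*} [AddCommMonoid M] {i₀ i₁ j₀ j₁ : Fin 4} (hii : i₀ ≠ i₁)
    (hcompl : ({i₀, i₁}ᶜ : Finset (Fin 4)) = {j₀, j₁}) (hjj : j₀ ≠ j₁) (f : Fin 4 → M) :
    ∑ j, f j = f i₀ + f i₁ + (f j₀ + f j₁) := by
  rw [← Finset.sum_add_sum_compl {i₀, i₁} f, hcompl, Finset.sum_pair hii,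
    Finset.sum_pair hjj]

lemma mem4 {i₀ i₁ j₀ j₁ : Fin 4}
    (hcompl : ({i₀, i₁}ᶜ : Finset (Fin 4)) = {j₀, j₁}) (i : Fin 4) :
    i = i₀ ∨ i = i₁ ∨ i = j₀ ∨ i = j₁ := by
  by_cases h : i ∈ ({i₀, i₁} : Finset (Fin 4))
  · simp only [Finset.mem_insert, Finset.mem_singleton] at h
    tauto
  · have : i ∈ ({i₀, i₁}ᶜ : Finset (Fin 4)) := Finset.mem_compl.mpr h
    rw [hcompl] at this
    simp only [Finset.mem_insert, Finset.mem_singleton] at this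
    tauto

/-! ### Basepoint freeness via evaluation -/

lemma bpf_eval {p : Fin 4 → MvPolynomial (Fin 4) k}
    (hbpf : (Ideal.span (Set.range p)).radical =
      Ideal.span {X 0, X 1} ⊓ Ideal.span {X 2, X 3})
    (z : Fin 4 → k) (hz01 : ¬(z 0 = 0 ∧ z 1 = 0)) (hz23 : ¬(z 2 = 0 ∧ z 3 = 0)) :
    ∃ i, eval z (p i) ≠ 0 := by
  by_contra hc
  push_neg at hc
  have hker : Ideal.span (Set.range p) ≤ RingHom.ker (eval z) := by
    rw [Ideal.span_le]
    rintro _ ⟨i, rfl⟩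
    exact hc i
  have hprod : ∀ i j : Fin 4, (X i : MvPolynomial (Fin 4) k) ∈ ({X 0, X 1} : Set _) →
      (X j : MvPolynomial (Fin 4) k) ∈ ({X 2, X 3} : Set _) → z i * z j = 0 := by
    intro i j hi hj
    have hmem : (X i * X j : MvPolynomial (Fin 4) k) ∈ (Ideal.span (Set.range p)).radical := by
      rw [hbpf]
      exact Ideal.mem_inf.mpr ⟨Ideal.mul_mem_right _ _ (Ideal.subset_span hi),
        Ideal.mul_mem_left _ _ (Ideal.subset_span hj)⟩
    obtain ⟨n, hn⟩ := hmem
    have hk := hker hn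
    rw [RingHom.mem_ker, map_pow, map_mul, eval_X, eval_X] at hk
    exact (pow_eq_zero_iff'.mp hk).1
  have h02 : z 0 * z 2 = 0 := hprod 0 2 (by simp) (by simp)
  have h03 : z 0 * z 3 = 0 := hprod 0 3 (by simp) (by simp)
  have h12 : z 1 * z 2 = 0 := hprod 1 2 (by simp) (by simp)
  have h13 : z 1 * z 3 = 0 := hprod 1 3 (by simp) (by simp)
  rcases not_and_or.mp hz01 with h0 | h1 <;> rcases not_and_or.mp hz23 with h2 | h3
  · exact absurd h02 (mul_ne_zero h0 h2)
  · exact absurd h03 (mul_ne_zero h0 h3)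
  · exact absurd h12 (mul_ne_zero h1 h2)
  · exact absurd h13 (mul_ne_zero h1 h3)

end St2Aux

open St2Aux

set_option maxHeartbeats 4000000 in
/-- If U is basepoint free, then I_U cannot have first syzygies of
both bidegree (0,1) and bidegree (1,0). -/
theorem statement2 {k : Type*} [Field k] [IsAlgClosed k]
    (p : Fin 4 → MvPolynomial (Fin 4) k)
    (hli : LinearIndependent k p)
    (hdeg : ∀ i, p i ∈ biDeg k 2 1)
    (hbpf : (Ideal.span (Set.range p)).radical =
      Ideal.span {X 0, X 1} ⊓ Ideal.span {X 2, X 3}) :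
    ¬ (Syz p 0 1 ≠ ⊥ ∧ Syz p 1 0 ≠ ⊥) := by
  rintro ⟨h01, h10⟩
  classical
  -- extract the (0,1) syzygy
  obtain ⟨ℓ, hℓmem, hℓne⟩ := (Submodule.ne_bot_iff _).mp h01
  rw [Syz, Submodule.mem_inf] at hℓmem
  obtain ⟨hℓpi, hℓker⟩ := hℓmem
  have hℓdeg : ∀ i, ℓ i ∈ biDeg k 0 1 := fun i => Submodule.mem_pi.mp hℓpi i trivial
  have hℓsyz : ∑ i, ℓ i * p i = 0 := LinearMap.mem_ker.mp hℓker
  set α : Fin 4 → k := fun i => coeff (Finsupp.single 2 1) (ℓ i) with hα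
  set β : Fin 4 → k := fun i => coeff (Finsupp.single 3 1) (ℓ i) with hβ
  have hℓrep : ∀ i, ℓ i = C (α i) * X 2 + C (β i) * X 3 := fun i => repL01 (hℓdeg i)
  set q : MvPolynomial (Fin 4) k := ∑ i, C (α i) * p i with hqdef
  set q' : MvPolynomial (Fin 4) k := ∑ i, C (β i) * p i with hq'def
  have hqq' : X 2 * q + X 3 * q' = 0 := by
    rw [hqdef, hq'def, Finset.mul_sum, Finset.mul_sum, ← Finset.sum_add_distrib, ← hℓsyz]
    exact Finset.sum_congr rfl fun i _ => by rw [hℓrep i]; ring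
  have hqmem : q ∈ biDeg k 2 1 := Submodule.sum_mem _ fun i _ => by
    rw [C_mul']; exact Submodule.smul_mem _ _ (hdeg i)
  have hq'mem : q' ∈ biDeg k 2 1 := Submodule.sum_mem _ fun i _ => by
    rw [C_mul']; exact Submodule.smul_mem _ _ (hdeg i)
  obtain ⟨A₀, B₀, hA₀, hB₀, hqrep⟩ := splitUV hqmem
  obtain ⟨A₁, B₁, hA₁, hB₁, hq'rep⟩ := splitUV hq'mem
  have hkey0 : (X 2 * X 2) * A₀ + (X 2 * X 3) * (B₀ + A₁) + (X 3 * X 3) * B₁ = 0 := by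
    linear_combination hqq' - X 2 * hqrep - X 3 * hq'rep
  obtain ⟨hA₀0, hBA, hB₁0⟩ := split2 (onlyST_of_biDeg hA₀)
    ((onlyST_of_biDeg hB₀).add (onlyST_of_biDeg hA₁)) (onlyST_of_biDeg hB₁) hkey0
  have hwmem : B₀ ∈ biDeg k 2 0 := hB₀
  set w : MvPolynomial (Fin 4) k := B₀ with hwdefn
  have hq3 : q = X 3 * w := by rw [hqrep, hA₀0]; ring
  have hq2 : q' = -(X 2 * w) := by
    have hA₁w : A₁ = -w := by rw [hwdefn]; linear_combination hBA
    rw [hq'rep, hB₁0, hA₁w]; ring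
  -- w is nonzero
  have hwne : w ≠ 0 := by
    intro hw0
    have hq0 : q = 0 := by rw [hq3, hw0, mul_zero]
    have hq'0 : q' = 0 := by rw [hq2, hw0]; ring
    have hsumα : ∑ i, α i • p i = 0 := by
      rw [← hq0, hqdef]
      exact Finset.sum_congr rfl fun i _ => by rw [C_mul']
    have hsumβ : ∑ i, β i • p i = 0 := by
      rw [← hq'0, hq'def]
      exact Finset.sum_congr rfl fun i _ => by rw [C_mul']
    have hαz := Fintype.linearIndependent_iff.mp hli α hsumα
    have hβz := Fintype.linearIndependent_iff.mp hli β hsumβ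
    apply hℓne
    funext i
    rw [hℓrep i, hαz i, hβz i]
    simp
  -- choose i₀ with α i₀ ≠ 0
  have hi₀ : ∃ i, α i ≠ 0 := by
    by_contra hcon
    push_neg at hcon
    have hq0 : q = 0 := by
      rw [hqdef]
      exact Finset.sum_eq_zero fun i _ => by rw [hcon i, map_zero, zero_mul]
    rw [hq3] at hq0
    rcases mul_eq_zero.mp hq0 with h | h
    · exact X_ne_zero 3 h
    · exact hwne h
  obtain ⟨i₀, hαi₀⟩ := hi₀
  set c : k := β i₀ / α i₀ with hc
  set β' : Fin 4 → k := fun i => β i - c * α i with hβ'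
  have hβ'i₀ : β' i₀ = 0 := by rw [hβ']; simp only; rw [hc]; field_simp; ring
  have hβ'q : ∑ i, C (β' i) * p i = -(X 2 * w) - C c * (X 3 * w) := by
    rw [← hq2, ← hq3, hqdef, hq'def, Finset.mul_sum, ← Finset.sum_sub_distrib]
    refine Finset.sum_congr rfl fun i _ => ?_
    rw [hβ']; simp only
    rw [map_sub, map_mul]
    ring
  have hi₁ : ∃ i, β' i ≠ 0 := by
    by_contra hcon
    push_neg at hcon
    have h0 : (0 : MvPolynomial (Fin 4) k) = -(X 2 * w) - C c * (X 3 * w) := by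
      rw [← hβ'q]
      exact (Finset.sum_eq_zero fun i _ => by rw [hcon i, map_zero, zero_mul]).symm
    have hfac : (C (1:k) * X 2 + C c * X 3) * w = 0 := by
      rw [map_one]
      linear_combination h0
    rcases mul_eq_zero.mp hfac with h | h
    · exact one_ne_zero (lin_eq_zero (by decide) h).1
    · exact hwne h
  obtain ⟨i₁, hβ'i₁⟩ := hi₁
  have hii : i₀ ≠ i₁ := fun h => hβ'i₁ (h ▸ hβ'i₀)
  -- complement indices
  have hcard : ({i₀, i₁}ᶜ : Finset (Fin 4)).card = 2 := by
    rw [Finset.card_compl, Finset.card_pair hii, Fintype.card_fin]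
  obtain ⟨j₀, j₁, hjj, hcompl⟩ := Finset.card_eq_two.mp hcard
  have hj₀mem : j₀ ∉ ({i₀, i₁} : Finset (Fin 4)) := by
    rw [← Finset.mem_compl, hcompl]
    exact Finset.mem_insert_self _ _
  have hj₁mem : j₁ ∉ ({i₀, i₁} : Finset (Fin 4)) := by
    rw [← Finset.mem_compl, hcompl]
    exact Finset.mem_insert_of_mem (Finset.mem_singleton_self _)
  -- split p j₀ and p j₁
  obtain ⟨A, B, hAmem, hBmem, hPrep⟩ := splitUV (hdeg j₀)
  obtain ⟨A', B', hA'mem, hB'mem, hQrep⟩ := splitUV (hdeg j₁)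
  -- the key basepoint-freeness consequence: at every root of w the 2x2 matrix is invertible
  have hroot : ∀ s₀ t₀ : k, ¬(s₀ = 0 ∧ t₀ = 0) → eval ![s₀, t₀, 0, 0] w = 0 →
      eval ![s₀, t₀, 0, 0] A * eval ![s₀, t₀, 0, 0] B'
        - eval ![s₀, t₀, 0, 0] A' * eval ![s₀, t₀, 0, 0] B ≠ 0 := by
    intro s₀ t₀ hst hw0 hdet0
    obtain ⟨u₀, v₀, huv, hk1, hk2⟩ := kernel22 hdet0
    set z : Fin 4 → k := ![s₀, t₀, u₀, v₀] with hzdef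
    have hz0 : z 0 = s₀ := rfl
    have hz1 : z 1 = t₀ := rfl
    have hz2 : z 2 = u₀ := rfl
    have hz3 : z 3 = v₀ := rfl
    have hev : ∀ f : MvPolynomial (Fin 4) k, onlyST f → eval z f = eval ![s₀, t₀, 0, 0] f :=
      fun f hf => hf.eval_congr rfl rfl
    have hwz : eval z w = 0 := by rw [hev w (onlyST_of_biDeg hwmem)]; exact hw0
    have hEj₀ : eval z (p j₀) = 0 := by
      rw [hPrep, map_add, map_mul, map_mul, eval_X, eval_X, hz2, hz3,
        hev A (onlyST_of_biDeg hAmem), hev B (onlyST_of_biDeg hBmem)]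
      linear_combination hk1
    have hEj₁ : eval z (p j₁) = 0 := by
      rw [hQrep, map_add, map_mul, map_mul, eval_X, eval_X, hz2, hz3,
        hev A' (onlyST_of_biDeg hA'mem), hev B' (onlyST_of_biDeg hB'mem)]
      linear_combination hk2
    have hsumα : ∑ i, α i * eval z (p i) = 0 := by
      have hq0 : eval z q = 0 := by rw [hq3, map_mul, eval_X, hz3, hwz, mul_zero]
      rw [← hq0, hqdef, map_sum]
      exact Finset.sum_congr rfl fun i _ => by rw [map_mul, eval_C]
    have hsumβ' : ∑ i, β' i * eval z (p i) = 0 := by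
      have h1 : eval z (∑ i, C (β' i) * p i) = 0 := by
        rw [hβ'q, map_sub, map_neg, map_mul, map_mul, map_mul, eval_X, eval_X, eval_C,
          hz2, hz3, hwz]
        ring
      rw [← h1, map_sum]
      exact Finset.sum_congr rfl fun i _ => by rw [map_mul, eval_C]
    rw [sum4 hii hcompl hjj] at hsumα hsumβ'
    have hEi₁ : eval z (p i₁) = 0 := by
      have h2 : β' i₁ * eval z (p i₁) = 0 := by
        rw [hβ'i₀, hEj₀, hEj₁] at hsumβ'
        linear_combination hsumβ'
      rcases mul_eq_zero.mp h2 with h | h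
      · exact absurd h hβ'i₁
      · exact h
    have hEi₀ : eval z (p i₀) = 0 := by
      have h2 : α i₀ * eval z (p i₀) = 0 := by
        rw [hEj₀, hEj₁, hEi₁] at hsumα
        linear_combination hsumα
      rcases mul_eq_zero.mp h2 with h | h
      · exact absurd h hαi₀
      · exact h
    obtain ⟨i, hi⟩ := bpf_eval hbpf z (by rw [hz0, hz1]; exact hst)
      (by
        rw [hz2, hz3]
        rcases huv with h | h
        · exact fun hc => h hc.1
        · exact fun hc => h hc.2)
    rcases mem4 hcompl i with rfl | rfl | rfl | rfl
    · exact hi hEi₀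
    · exact hi hEi₁
    · exact hi hEj₀
    · exact hi hEj₁
  -- extract the (1,0) syzygy
  obtain ⟨mm, hmmem, hmne⟩ := (Submodule.ne_bot_iff _).mp h10
  rw [Syz, Submodule.mem_inf] at hmmem
  obtain ⟨hmpi, hmker⟩ := hmmem
  have hmdeg : ∀ i, mm i ∈ biDeg k 1 0 := fun i => Submodule.mem_pi.mp hmpi i trivial
  have hmsyz : ∑ i, mm i * p i = 0 := LinearMap.mem_ker.mp hmker
  -- reduce the syzygy modulo α and β'
  set N₁ : MvPolynomial (Fin 4) k := C (α i₀)⁻¹ * mm i₀ with hN₁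
  set N₂ : MvPolynomial (Fin 4) k := C (β' i₁)⁻¹ * (mm i₁ - N₁ * C (α i₁)) with hN₂
  set M' : Fin 4 → MvPolynomial (Fin 4) k :=
    fun j => mm j - N₁ * C (α j) - N₂ * C (β' j) with hM'
  have hN₁deg : N₁ ∈ biDeg k 1 0 := by
    rw [hN₁, C_mul']; exact Submodule.smul_mem _ _ (hmdeg i₀)
  have hN₂deg : N₂ ∈ biDeg k 1 0 := by
    rw [hN₂, C_mul']
    exact Submodule.smul_mem _ _ (Submodule.sub_mem _ (hmdeg i₁)
      (by rw [mul_comm, C_mul']; exact Submodule.smul_mem _ _ hN₁deg))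
  have hM'deg : ∀ j, M' j ∈ biDeg k 1 0 := by
    intro j
    rw [hM']; simp only
    exact Submodule.sub_mem _ (Submodule.sub_mem _ (hmdeg j)
        (by rw [mul_comm, C_mul']; exact Submodule.smul_mem _ _ hN₁deg))
      (by rw [mul_comm, C_mul']; exact Submodule.smul_mem _ _ hN₂deg)
  have hM'i₀ : M' i₀ = 0 := by
    have h1 : C (α i₀)⁻¹ * C (α i₀) = (1 : MvPolynomial (Fin 4) k) := by
      rw [← map_mul, inv_mul_cancel₀ hαi₀, map_one]
    rw [hM']; simp only
    rw [hβ'i₀, map_zero, mul_zero, sub_zero, hN₁]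
    linear_combination (-(mm i₀)) * h1
  have hM'i₁ : M' i₁ = 0 := by
    have h1 : C (β' i₁)⁻¹ * C (β' i₁) = (1 : MvPolynomial (Fin 4) k) := by
      rw [← map_mul, inv_mul_cancel₀ hβ'i₁, map_one]
    rw [hM']; simp only
    rw [hN₂]
    linear_combination (-(mm i₁ - N₁ * C (α i₁))) * h1
  -- the master relation
  have hmain : (0 : MvPolynomial (Fin 4) k)
      = (M' j₀ * p j₀ + M' j₁ * p j₁)
        + (N₁ * (X 3 * w) + N₂ * (-(X 2 * w) - C c * (X 3 * w))) := by
    have h1 : ∑ j, mm j * p j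
        = ∑ j, (M' j * p j + (N₁ * (C (α j) * p j) + N₂ * (C (β' j) * p j))) := by
      refine Finset.sum_congr rfl fun j _ => ?_
      rw [hM']; simp only
      ring
    have h2 : ∑ j, mm j * p j
        = (∑ j, M' j * p j) + (N₁ * (∑ j, C (α j) * p j) + N₂ * (∑ j, C (β' j) * p j)) := by
      rw [h1, Finset.sum_add_distrib, Finset.sum_add_distrib, Finset.mul_sum, Finset.mul_sum]
    rw [hmsyz] at h2
    rw [sum4 hii hcompl hjj (fun j => M' j * p j)] at h2
    rw [hM'i₀, hM'i₁] at h2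
    simp only [zero_mul, zero_add] at h2
    rw [← hqdef, hq3, hβ'q] at h2
    exact h2
  have hzero : (M' j₀ * p j₀ + M' j₁ * p j₁)
      + (N₁ * (X 3 * w) + N₂ * (-(X 2 * w) - C c * (X 3 * w))) = 0 := hmain.symm
  have hkey : X 2 * (M' j₀ * A + M' j₁ * A' - N₂ * w)
      + X 3 * (M' j₀ * B + M' j₁ * B' + N₁ * w - C c * (N₂ * w)) = 0 := by
    linear_combination hzero - M' j₀ * hPrep - M' j₁ * hQrep
  have hstw : onlyST w := onlyST_of_biDeg hwmem
  have hstA : onlyST A := onlyST_of_biDeg hAmem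
  have hstB : onlyST B := onlyST_of_biDeg hBmem
  have hstA' : onlyST A' := onlyST_of_biDeg hA'mem
  have hstB' : onlyST B' := onlyST_of_biDeg hB'mem
  have hstM'0 : onlyST (M' j₀) := onlyST_of_biDeg (hM'deg j₀)
  have hstM'1 : onlyST (M' j₁) := onlyST_of_biDeg (hM'deg j₁)
  have hstN₁ : onlyST N₁ := onlyST_of_biDeg hN₁deg
  have hstN₂ : onlyST N₂ := onlyST_of_biDeg hN₂deg
  obtain ⟨hFA, hFB⟩ := splitST
    (((hstM'0.mul hstA).add (hstM'1.mul hstA')).sub (hstN₂.mul hstw))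
    ((((hstM'0.mul hstB).add (hstM'1.mul hstB')).add (hstN₁.mul hstw)).sub
      ((hstN₂.mul hstw).C_mul c))
    (by
      have : C c * (N₂ * w) = C c * (N₂ * w) := rfl
      linear_combination hkey)
  have RA : M' j₀ * A + M' j₁ * A' = N₂ * w := by linear_combination hFA
  have RB : M' j₀ * B + M' j₁ * B' = C c * (N₂ * w) - N₁ * w := by linear_combination hFB
  -- factor w
  have hwrep := repL20 hwmem
  set w2 : k := coeff (Finsupp.single 0 2) w with hw2
  set w1 : k := coeff (Finsupp.single 0 1 + Finsupp.single 1 1) w with hw1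
  set w0 : k := coeff (Finsupp.single 1 2) w with hw0
  have hwco : ¬(w2 = 0 ∧ w1 = 0 ∧ w0 = 0) := by
    rintro ⟨ha, hb, hcc⟩
    apply hwne
    rw [hwrep, ha, hb, hcc]
    simp
  obtain ⟨p1, q1, p2, q2, hpq1, hpq2, he2, he1, he0⟩ := quadFactor hwco
  have hwfact : w = (C p1 * X 0 + C q1 * X 1) * (C p2 * X 0 + C q2 * X 1) := by
    rw [hwrep, he2, he1, he0]
    simp only [map_mul, map_add]
    ring
  -- the two roots of w
  have hz10 : (![q1, -p1, 0, 0] : Fin 4 → k) 0 = q1 := rfl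
  have hz11 : (![q1, -p1, 0, 0] : Fin 4 → k) 1 = -p1 := rfl
  have hz20 : (![q2, -p2, 0, 0] : Fin 4 → k) 0 = q2 := rfl
  have hz21 : (![q2, -p2, 0, 0] : Fin 4 → k) 1 = -p2 := rfl
  have hwz1 : eval ![q1, -p1, 0, 0] w = 0 := by
    rw [hwfact, map_mul]
    have h1 : eval ![q1, -p1, 0, 0] (C p1 * X 0 + C q1 * X 1) = 0 := by
      rw [map_add, map_mul, map_mul, eval_C, eval_C, eval_X, eval_X, hz10, hz11]
      ring
    rw [h1, zero_mul]
  have hwz2 : eval ![q2, -p2, 0, 0] w = 0 := by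
    rw [hwfact, map_mul]
    have h1 : eval ![q2, -p2, 0, 0] (C p2 * X 0 + C q2 * X 1) = 0 := by
      rw [map_add, map_mul, map_mul, eval_C, eval_C, eval_X, eval_X, hz20, hz21]
      ring
    rw [h1, mul_zero]
  have hne1 : ¬(q1 = 0 ∧ -p1 = 0) := by
    rintro ⟨ha, hb⟩
    exact hpq1 ⟨by simpa using hb, ha⟩
  have hne2 : ¬(q2 = 0 ∧ -p2 = 0) := by
    rintro ⟨ha, hb⟩
    exact hpq2 ⟨by simpa using hb, ha⟩
  have hdet1 := hroot q1 (-p1) hne1 hwz1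
  have hdet2 := hroot q2 (-p2) hne2 hwz2
  -- coefficients of M' j₀ and M' j₁
  have rep0 := repL10 (hM'deg j₀)
  have rep1 := repL10 (hM'deg j₁)
  set x₀ : k := coeff (Finsupp.single 0 1) (M' j₀) with hx₀
  set y₀ : k := coeff (Finsupp.single 1 1) (M' j₀) with hy₀
  set x₁ : k := coeff (Finsupp.single 0 1) (M' j₁) with hx₁
  set y₁ : k := coeff (Finsupp.single 1 1) (M' j₁) with hy₁
  have eM01 : eval ![q1, -p1, 0, 0] (M' j₀) = x₀ * q1 - y₀ * p1 := by
    rw [rep0]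
    simp only [map_add, map_mul, eval_C, eval_X, hz10, hz11]
    ring
  have eM02 : eval ![q2, -p2, 0, 0] (M' j₀) = x₀ * q2 - y₀ * p2 := by
    rw [rep0]
    simp only [map_add, map_mul, eval_C, eval_X, hz20, hz21]
    ring
  have eM11 : eval ![q1, -p1, 0, 0] (M' j₁) = x₁ * q1 - y₁ * p1 := by
    rw [rep1]
    simp only [map_add, map_mul, eval_C, eval_X, hz10, hz11]
    ring
  have eM12 : eval ![q2, -p2, 0, 0] (M' j₁) = x₁ * q2 - y₁ * p2 := by
    rw [rep1]
    simp only [map_add, map_mul, eval_C, eval_X, hz20, hz21]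
    ring
  -- evaluate the relations at the roots
  have hRA1 : eval ![q1, -p1, 0, 0] (M' j₀) * eval ![q1, -p1, 0, 0] A
      + eval ![q1, -p1, 0, 0] (M' j₁) * eval ![q1, -p1, 0, 0] A' = 0 := by
    have h := congrArg (eval ![q1, -p1, 0, 0]) RA
    simp only [map_add, map_mul, eval_C] at h
    linear_combination h + eval ![q1, -p1, 0, 0] N₂ * hwz1
  have hRB1 : eval ![q1, -p1, 0, 0] (M' j₀) * eval ![q1, -p1, 0, 0] B
      + eval ![q1, -p1, 0, 0] (M' j₁) * eval ![q1, -p1, 0, 0] B' = 0 := by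
    have h := congrArg (eval ![q1, -p1, 0, 0]) RB
    simp only [map_add, map_mul, map_sub, eval_C] at h
    linear_combination h + (c * eval ![q1, -p1, 0, 0] N₂ - eval ![q1, -p1, 0, 0] N₁) * hwz1
  have hRA2 : eval ![q2, -p2, 0, 0] (M' j₀) * eval ![q2, -p2, 0, 0] A
      + eval ![q2, -p2, 0, 0] (M' j₁) * eval ![q2, -p2, 0, 0] A' = 0 := by
    have h := congrArg (eval ![q2, -p2, 0, 0]) RA
    simp only [map_add, map_mul, eval_C] at h
    linear_combination h + eval ![q2, -p2, 0, 0] N₂ * hwz2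
  have hRB2 : eval ![q2, -p2, 0, 0] (M' j₀) * eval ![q2, -p2, 0, 0] B
      + eval ![q2, -p2, 0, 0] (M' j₁) * eval ![q2, -p2, 0, 0] B' = 0 := by
    have h := congrArg (eval ![q2, -p2, 0, 0]) RB
    simp only [map_add, map_mul, map_sub, eval_C] at h
    linear_combination h + (c * eval ![q2, -p2, 0, 0] N₂ - eval ![q2, -p2, 0, 0] N₁) * hwz2
  obtain ⟨hm01, hm11⟩ := solve22 hdet1 hRA1 hRB1
  obtain ⟨hm02, hm12⟩ := solve22 hdet2 hRA2 hRB2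
  have hc01 : x₀ * q1 - y₀ * p1 = 0 := by rw [← eM01]; exact hm01
  have hc02 : x₀ * q2 - y₀ * p2 = 0 := by rw [← eM02]; exact hm02
  have hc11 : x₁ * q1 - y₁ * p1 = 0 := by rw [← eM11]; exact hm11
  have hc12 : x₁ * q2 - y₁ * p2 = 0 := by rw [← eM12]; exact hm12
  -- deduce that M' j₀ = M' j₁ = 0
  have hM'zero : M' j₀ = 0 ∧ M' j₁ = 0 := by
    by_cases hcase : p1 * q2 - p2 * q1 = 0
    · -- w has a double root
      obtain ⟨lam, hl1, hl2⟩ := propOf (x := p2) (y := q2) (pp := p1) (q := q1)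
        (by linear_combination -hcase) hpq1
      obtain ⟨μ₀, hμ₀x, hμ₀y⟩ := propOf (x := x₀) (y := y₀) (pp := p1) (q := q1)
        (by linear_combination hc01) hpq1
      obtain ⟨μ₁, hμ₁x, hμ₁y⟩ := propOf (x := x₁) (y := y₁) (pp := p1) (q := q1)
        (by linear_combination hc11) hpq1
      set L : MvPolynomial (Fin 4) k := C p1 * X 0 + C q1 * X 1 with hL
      have hLne : L ≠ 0 := by
        intro hzero
        exact hpq1 (lin_eq_zero (by decide) hzero)
      have hM0L : M' j₀ = C μ₀ * L := by
        rw [rep0, hμ₀x, hμ₀y, hL, map_mul, map_mul]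
        ring
      have hM1L : M' j₁ = C μ₁ * L := by
        rw [rep1, hμ₁x, hμ₁y, hL, map_mul, map_mul]
        ring
      have hwL : w = C lam * (L * L) := by
        rw [hwfact, hl1, hl2, hL, map_mul, map_mul]
        ring
      have hRA' : C μ₀ * A + C μ₁ * A' = C lam * N₂ * L := by
        have h1 : L * (C μ₀ * A + C μ₁ * A' - C lam * N₂ * L) = 0 := by
          rw [hM0L, hM1L, hwL] at RA
          linear_combination RA
        rcases mul_eq_zero.mp h1 with h | h
        · exact absurd h hLne
        · linear_combination h
      have hRB' : C μ₀ * B + C μ₁ * B' = C lam * (C c * N₂ - N₁) * L := by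
        have h1 : L * (C μ₀ * B + C μ₁ * B' - C lam * (C c * N₂ - N₁) * L) = 0 := by
          rw [hM0L, hM1L, hwL] at RB
          linear_combination RB
        rcases mul_eq_zero.mp h1 with h | h
        · exact absurd h hLne
        · linear_combination h
      have hLz1 : eval ![q1, -p1, 0, 0] L = 0 := by
        rw [hL, map_add, map_mul, map_mul, eval_C, eval_C, eval_X, eval_X, hz10, hz11]
        ring
      have hA1 : μ₀ * eval ![q1, -p1, 0, 0] A + μ₁ * eval ![q1, -p1, 0, 0] A' = 0 := by
        have h := congrArg (eval ![q1, -p1, 0, 0]) hRA'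
        simp only [map_add, map_mul, eval_C] at h
        linear_combination h + lam * eval ![q1, -p1, 0, 0] N₂ * hLz1
      have hB1 : μ₀ * eval ![q1, -p1, 0, 0] B + μ₁ * eval ![q1, -p1, 0, 0] B' = 0 := by
        have h := congrArg (eval ![q1, -p1, 0, 0]) hRB'
        simp only [map_add, map_mul, map_sub, eval_C] at h
        linear_combination h + lam * (c * eval ![q1, -p1, 0, 0] N₂ - eval ![q1, -p1, 0, 0] N₁) * hLz1
      obtain ⟨hμ₀0, hμ₁0⟩ := solve22 hdet1 hA1 hB1
      constructor
      · rw [hM0L, hμ₀0, map_zero, zero_mul]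
      · rw [hM1L, hμ₁0, map_zero, zero_mul]
    · -- w has two distinct roots
      have hdd : q1 * (-p2) - (-p1) * q2 ≠ 0 := by
        intro h
        exact hcase (by linear_combination h)
      obtain ⟨hx₀0, hy₀0⟩ := solve22 (m₀ := x₀) (m₁ := y₀) hdd
        (by linear_combination hc01) (by linear_combination hc02)
      obtain ⟨hx₁0, hy₁0⟩ := solve22 (m₀ := x₁) (m₁ := y₁) hdd
        (by linear_combination hc11) (by linear_combination hc12)
      constructor
      · rw [rep0, hx₀0, hy₀0]; simp
      · rw [rep1, hx₁0, hy₁0]; simp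
  obtain ⟨hMj₀, hMj₁⟩ := hM'zero
  -- conclude N₁ = N₂ = 0 and then mm = 0, a contradiction
  have hN₂0 : N₂ = 0 := by
    have h : N₂ * w = 0 := by
      rw [← RA, hMj₀, hMj₁]
      ring
    rcases mul_eq_zero.mp h with h' | h'
    · exact h'
    · exact absurd h' hwne
  have hN₁0 : N₁ = 0 := by
    have h : N₁ * w = 0 := by
      have h2 := RB
      rw [hMj₀, hMj₁, hN₂0] at h2
      linear_combination h2
    rcases mul_eq_zero.mp h with h' | h'
    · exact h'
    · exact absurd h' hwne
  apply hmne
  funext j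
  have hMj : M' j = 0 := by
    rcases mem4 hcompl j with rfl | rfl | rfl | rfl
    · exact hM'i₀
    · exact hM'i₁
    · exact hMj₀
    · exact hMj₁
  have hmmj : mm j = M' j + N₁ * C (α j) + N₂ * C (β' j) := by
    rw [hM']; simp only
    ring
  show mm j = 0
  rw [hmmj, hMj, hN₁0, hN₂0]
  simp
end
end

section
/- If U is basepoint free, then the k-vector space Syz_{(1,0)} of bidegree (1,0) syzygies on p_0,…,p_3 has dimension at most 1; that is, there can be at most one linear first syzygy of bidegree (1,0). -/
open MvPolynomial

noncomputable section

namespace Stmt3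


def mvec : Fin 6 → Fin 4 → ℕ := ![![2,0,1,0],![2,0,0,1],![1,1,1,0],![1,1,0,1],![0,2,1,0],![0,2,0,1]]
def nvec : Fin 8 → Fin 4 → ℕ := ![![3,0,1,0],![3,0,0,1],![2,1,1,0],![2,1,0,1],![1,2,1,0],![1,2,0,1],![0,3,1,0],![0,3,0,1]]
def mexp (j : Fin 6) : Fin 4 →₀ ℕ := Finsupp.equivFunOnFinite.symm (mvec j)
def nexp (j : Fin 8) : Fin 4 →₀ ℕ := Finsupp.equivFunOnFinite.symm (nvec j)

lemma mexp_inj : Function.Injective mexp :=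
  fun _ _ h => (by decide : Function.Injective mvec) (Finsupp.equivFunOnFinite.symm.injective h)
lemma nexp_inj : Function.Injective nexp :=
  fun _ _ h => (by decide : Function.Injective nvec) (Finsupp.equivFunOnFinite.symm.injective h)

lemma single_eq_symm (i : Fin 4) :
    Finsupp.single i 1 = Finsupp.equivFunOnFinite.symm (fun j => if j = i then 1 else 0) := by
  ext j; simp [Finsupp.single_apply, eq_comm]

lemma symm_add (f g : Fin 4 → ℕ) :
    Finsupp.equivFunOnFinite.symm f + Finsupp.equivFunOnFinite.symm g
      = Finsupp.equivFunOnFinite.symm (f + g) := by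
  ext i; simp

lemma e0_add_mexp (j : Fin 6) : Finsupp.single (0 : Fin 4) 1 + mexp j = nexp (j.castLE (by omega)) := by
  rw [single_eq_symm, mexp, symm_add, nexp]; congr 1; fin_cases j <;> decide

lemma e1_add_mexp (j : Fin 6) : Finsupp.single (1 : Fin 4) 1 + mexp j = nexp (j.castLE (by omega) + 2) := by
  rw [single_eq_symm, mexp, symm_add, nexp]; congr 1; fin_cases j <;> decide

variable {k : Type*} [CommRing k]

def Phi (c : Fin 6 → k) : MvPolynomial (Fin 4) k := ∑ j, monomial (mexp j) (c j)
def Psi (c : Fin 8 → k) : MvPolynomial (Fin 4) k := ∑ j, monomial (nexp j) (c j)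

lemma coeff_Phi (c : Fin 6 → k) (i : Fin 6) : coeff (mexp i) (Phi c) = c i := by
  classical
  simp [Phi, coeff_sum, coeff_monomial, mexp_inj.eq_iff]

lemma coeff_Psi (c : Fin 8 → k) (i : Fin 8) : coeff (nexp i) (Psi c) = c i := by
  classical
  simp [Psi, coeff_sum, coeff_monomial, nexp_inj.eq_iff]

lemma Psi_eq_zero {c : Fin 8 → k} (h : Psi c = 0) : c = 0 := by
  funext i
  have := coeff_Psi c i
  rw [h] at this; simpa using this.symm

lemma X_mul_Phi (s : Fin 4) (c : Fin 6 → k) :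
    X s * Phi c = ∑ j, monomial (Finsupp.single s 1 + mexp j) (c j) := by
  rw [Phi, Finset.mul_sum]
  refine Finset.sum_congr rfl fun j _ => ?_
  rw [X, monomial_mul, one_mul]

lemma coeff_X0_Phi (c : Fin 6 → k) (i : Fin 8) :
    coeff (nexp i) (X 0 * Phi c)
      = ∑ j : Fin 6, if (j.castLE (by omega) : Fin 8) = i then c j else 0 := by
  classical
  rw [X_mul_Phi]
  simp only [e0_add_mexp, coeff_sum, coeff_monomial, nexp_inj.eq_iff]

lemma coeff_X1_Phi (c : Fin 6 → k) (i : Fin 8) :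
    coeff (nexp i) (X 1 * Phi c)
      = ∑ j : Fin 6, if (j.castLE (by omega) + 2 : Fin 8) = i then c j else 0 := by
  classical
  rw [X_mul_Phi]
  simp only [e1_add_mexp, coeff_sum, coeff_monomial, nexp_inj.eq_iff]

lemma extract (c d : Fin 6 → k) (h : X 0 * Phi c + X 1 * Phi d = 0) :
    c 0 = 0 ∧ c 1 = 0 ∧ c 2 = -(d 0) ∧ c 3 = -(d 1) ∧ c 4 = -(d 2) ∧ c 5 = -(d 3)
      ∧ d 4 = 0 ∧ d 5 = 0 := by
  have H : ∀ i : Fin 8, coeff (nexp i) (X 0 * Phi c) + coeff (nexp i) (X 1 * Phi d) = 0 := by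
    intro i; rw [← coeff_add, h, coeff_zero]
  simp only [coeff_X0_Phi, coeff_X1_Phi, Fin.sum_univ_six] at H
  have h0 := H 0; have h1 := H 1; have h2 := H 2; have h3 := H 3
  have h4 := H 4; have h5 := H 5; have h6 := H 6; have h7 := H 7
  simp (config := { decide := true }) only [] at h0 h1 h2 h3 h4 h5 h6 h7
  norm_num at h0 h1 h2 h3 h4 h5 h6 h7
  refine ⟨h0, h1, by linear_combination h2, by linear_combination h3, by linear_combination h4, by linear_combination h5, h6, h7⟩


lemma mexp_classify (d : Fin 4 →₀ ℕ) (h01 : d 0 + d 1 = 2) (h23 : d 2 + d 3 = 1) :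
    ∃ j, d = mexp j := by
  have hd : d = Finsupp.equivFunOnFinite.symm ![d 0, d 1, d 2, d 3] := by
    ext i; fin_cases i <;> rfl
  have hc : (d 0 = 2 ∧ d 1 = 0 ∨ d 0 = 1 ∧ d 1 = 1 ∨ d 0 = 0 ∧ d 1 = 2) ∧
      (d 2 = 1 ∧ d 3 = 0 ∨ d 2 = 0 ∧ d 3 = 1) := by omega
  obtain ⟨h01' | h01' | h01', h23' | h23'⟩ := hc <;>
    [exact ⟨0, by rw [hd, h01'.1, h01'.2, h23'.1, h23'.2]; rfl⟩;
     exact ⟨1, by rw [hd, h01'.1, h01'.2, h23'.1, h23'.2]; rfl⟩;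
     exact ⟨2, by rw [hd, h01'.1, h01'.2, h23'.1, h23'.2]; rfl⟩;
     exact ⟨3, by rw [hd, h01'.1, h01'.2, h23'.1, h23'.2]; rfl⟩;
     exact ⟨4, by rw [hd, h01'.1, h01'.2, h23'.1, h23'.2]; rfl⟩;
     exact ⟨5, by rw [hd, h01'.1, h01'.2, h23'.1, h23'.2]; rfl⟩]

lemma lexp_classify (d : Fin 4 →₀ ℕ) (h01 : d 0 + d 1 = 1) (h23 : d 2 + d 3 = 0) :
    d = Finsupp.single 0 1 ∨ d = Finsupp.single 1 1 := by
  have hd : d = Finsupp.equivFunOnFinite.symm ![d 0, d 1, d 2, d 3] := by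
    ext i; fin_cases i <;> rfl
  have hc : (d 0 = 1 ∧ d 1 = 0 ∨ d 0 = 0 ∧ d 1 = 1) ∧ d 2 = 0 ∧ d 3 = 0 := by omega
  obtain ⟨h01' | h01', h2', h3'⟩ := hc
  · left
    rw [hd, h01'.1, h01'.2, h2', h3', single_eq_symm]
    congr 1; funext i; fin_cases i <;> rfl
  · right
    rw [hd, h01'.1, h01'.2, h2', h3', single_eq_symm]
    congr 1; funext i; fin_cases i <;> rfl

lemma rep21 (q : MvPolynomial (Fin 4) k)
    (hq : ∀ d ∈ q.support, d 0 + d 1 = 2 ∧ d 2 + d 3 = 1) :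
    q = Phi (fun j => coeff (mexp j) q) := by
  classical
  ext d
  rw [Phi, coeff_sum]
  simp only [coeff_monomial]
  by_cases hd : ∃ j, d = mexp j
  · obtain ⟨j, rfl⟩ := hd
    rw [Finset.sum_eq_single j]
    · simp
    · intro b _ hb; rw [if_neg]; exact fun h => hb (mexp_inj h)
    · simp
  · rw [Finset.sum_eq_zero]
    · by_contra hc
      have hds : d ∈ q.support := by rwa [mem_support_iff]
      obtain ⟨h1, h2⟩ := hq d hds
      exact hd (mexp_classify d h1 h2)
    · intro j _
      rw [if_neg]
      exact fun h => hd ⟨j, h.symm⟩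

lemma rep10 (q : MvPolynomial (Fin 4) k)
    (hq : ∀ d ∈ q.support, d 0 + d 1 = 1 ∧ d 2 + d 3 = 0) :
    q = coeff (Finsupp.single 0 1) q • X 0 + coeff (Finsupp.single 1 1) q • X 1 := by
  classical
  have hsm : ∀ (a : k) (s : Fin 4), a • (X s : MvPolynomial (Fin 4) k)
      = monomial (Finsupp.single s 1) a := by
    intro a s
    rw [X, smul_monomial, smul_eq_mul, mul_one]
  rw [hsm, hsm]
  ext d
  rw [coeff_add]
  simp only [coeff_monomial]
  by_cases h0 : d = Finsupp.single 0 1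
  · subst h0
    rw [if_pos rfl, if_neg, add_zero]
    intro h
    have := congrArg (fun f => (f : Fin 4 →₀ ℕ) 1) h
    simp [Finsupp.single_apply] at this
  · by_cases h1 : d = Finsupp.single 1 1
    · subst h1
      rw [if_neg, if_pos rfl, zero_add]
      intro h
      have := congrArg (fun f => (f : Fin 4 →₀ ℕ) 1) h
      simp [Finsupp.single_apply] at this
    · rw [if_neg fun h => h0 h.symm, if_neg fun h => h1 h.symm, add_zero]
      by_contra hc
      have hds : d ∈ q.support := by rwa [mem_support_iff]
      obtain ⟨ha, hb⟩ := hq d hds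
      rcases lexp_classify d ha hb with h | h
      · exact h0 h
      · exact h1 h

lemma aeval_mono (s t u v : k) (j : Fin 6) (r : k) :
    aeval ![s, t, u, v] (monomial (mexp j) r)
      = r * (s ^ mvec j 0 * t ^ mvec j 1 * u ^ mvec j 2 * v ^ mvec j 3) := by
  rw [aeval_monomial, Finsupp.prod_fintype _ _ (fun i => pow_zero _), Fin.prod_univ_four]
  rfl

lemma aeval_Phi (s t u v : k) (c : Fin 6 → k) :
    aeval ![s, t, u, v] (Phi c)
      = (c 0 * u + c 1 * v) * s ^ 2 + (c 2 * u + c 3 * v) * (s * t)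
        + (c 4 * u + c 5 * v) * t ^ 2 := by
  have h0 : ∀ r : k, aeval ![s,t,u,v] (monomial (mexp 0) r) = r * (s^2 * t^0 * u^1 * v^0) :=
    fun r => aeval_mono s t u v 0 r
  have h1 : ∀ r : k, aeval ![s,t,u,v] (monomial (mexp 1) r) = r * (s^2 * t^0 * u^0 * v^1) :=
    fun r => aeval_mono s t u v 1 r
  have h2 : ∀ r : k, aeval ![s,t,u,v] (monomial (mexp 2) r) = r * (s^1 * t^1 * u^1 * v^0) :=
    fun r => aeval_mono s t u v 2 r
  have h3 : ∀ r : k, aeval ![s,t,u,v] (monomial (mexp 3) r) = r * (s^1 * t^1 * u^0 * v^1) :=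
    fun r => aeval_mono s t u v 3 r
  have h4 : ∀ r : k, aeval ![s,t,u,v] (monomial (mexp 4) r) = r * (s^0 * t^2 * u^1 * v^0) :=
    fun r => aeval_mono s t u v 4 r
  have h5 : ∀ r : k, aeval ![s,t,u,v] (monomial (mexp 5) r) = r * (s^0 * t^2 * u^0 * v^1) :=
    fun r => aeval_mono s t u v 5 r
  rw [Phi, map_sum, Fin.sum_univ_six, h0, h1, h2, h3, h4, h5]
  ring

lemma Phi_sum_smul (a : Fin 4 → k) (Cm : Fin 4 → Fin 6 → k) :
    ∑ i, a i • Phi (Cm i) = Phi (∑ i, a i • Cm i) := by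
  simp only [Phi, Finset.smul_sum, smul_monomial, smul_eq_mul, Finset.sum_apply,
    Pi.smul_apply, map_sum]
  rw [Finset.sum_comm]

def PhiL : (Fin 6 → k) →ₗ[k] MvPolynomial (Fin 4) k where
  toFun := Phi
  map_add' c c' := by simp [Phi, map_add, Finset.sum_add_distrib]
  map_smul' r c := by simp [Phi, smul_monomial, Finset.smul_sum]

variable {k : Type*} [Field k] [IsAlgClosed k]


def vA (M : Fin 4 → k) : Fin 6 → k := ![M 0, M 1, M 2, M 3, 0, 0]
def vB (M : Fin 4 → k) : Fin 6 → k := ![0, 0, M 0, M 1, M 2, M 3]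

def EvL (s t u v : k) : (Fin 6 → k) →ₗ[k] k where
  toFun w := (w 0 * u + w 1 * v) * s ^ 2 + (w 2 * u + w 3 * v) * (s * t)
      + (w 4 * u + w 5 * v) * t ^ 2
  map_add' w w' := by simp only [Pi.add_apply]; ring
  map_smul' c w := by simp only [Pi.smul_apply, smul_eq_mul, RingHom.id_apply]; ring

lemma quad_root (A B C : k) :
    ∃ s t : k, (s ≠ 0 ∨ t ≠ 0) ∧ A * s ^ 2 + B * (s * t) + C * t ^ 2 = 0 := by
  by_cases hA : A = 0
  · exact ⟨1, 0, Or.inl one_ne_zero, by simp [hA]⟩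
  · obtain ⟨r, hr⟩ := IsAlgClosed.exists_root
      (Polynomial.C A * Polynomial.X ^ 2 + Polynomial.C B * Polynomial.X + Polynomial.C C)
      (by rw [Polynomial.degree_quadratic hA]; exact two_ne_zero)
    refine ⟨r, 1, Or.inr one_ne_zero, ?_⟩
    have := Polynomial.IsRoot.eq_zero hr
    simp only [Polynomial.eval_add, Polynomial.eval_mul, Polynomial.eval_pow,
      Polynomial.eval_C, Polynomial.eval_X] at this
    linear_combination this

lemma lin_root (e f : k) (hef : ¬(e = 0 ∧ f = 0)) :
    ∃ u v : k, (u ≠ 0 ∨ v ≠ 0) ∧ e * u + f * v = 0 := by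
  refine ⟨-f, e, ?_, by ring⟩
  rcases not_and_or.mp hef with h | h
  · exact Or.inr h
  · exact Or.inl (by simpa using h)


open Submodule in
lemma key (C : Fin 4 → Fin 6 → k) (hC : LinearIndependent k C)
    (M M' : Fin 4 → k) (hMM' : LinearIndependent k ![M, M'])
    (hAM : vA M ∈ span k (Set.range C))
    (hBM : vB M ∈ span k (Set.range C))
    (hAM' : vA M' ∈ span k (Set.range C))
    (hBM' : vB M' ∈ span k (Set.range C)) :
    ∃ s t u v : k, (s ≠ 0 ∨ t ≠ 0) ∧ (u ≠ 0 ∨ v ≠ 0) ∧ ∀ i, EvL s t u v (C i) = 0 := by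
  classical
  set W := span k (Set.range C) with hWdef
  have hW : Module.finrank k W = 4 := by
    rw [finrank_span_eq_card hC]; simp
  by_cases hind : LinearIndependent k ![vA M, vB M, vA M', vB M']
  · -- independent case
    have hle : span k (Set.range ![vA M, vB M, vA M', vB M']) ≤ W := by
      rw [span_le]
      rintro _ ⟨i, rfl⟩
      fin_cases i
      · exact hAM
      · exact hBM
      · exact hAM'
      · exact hBM'
    have h4 : Module.finrank k (span k (Set.range ![vA M, vB M, vA M', vB M'])) = 4 := by
      rw [finrank_span_eq_card hind]; simp
    have heq := Submodule.eq_of_le_of_finrank_le hle (by rw [hW, h4])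
    obtain ⟨u0, v0, huv, hQ⟩ := quad_root (M 0 * M' 2 - M 2 * M' 0)
      (M 0 * M' 3 + M 1 * M' 2 - M 2 * M' 1 - M 3 * M' 0) (M 1 * M' 3 - M 3 * M' 1)
    set L1 : k := M 0 * u0 + M 1 * v0 with hL1def
    set L2 : k := M 2 * u0 + M 3 * v0 with hL2def
    set L1' : k := M' 0 * u0 + M' 1 * v0 with hL1'def
    set L2' : k := M' 2 * u0 + M' 3 * v0 with hL2'def
    have hdet : L1 * L2' - L2 * L1' = 0 := by
      rw [hL1def, hL2def, hL1'def, hL2'def]; linear_combination hQ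
    obtain ⟨s0, t0, hst, hE1, hE2⟩ :
        ∃ s0 t0 : k, (s0 ≠ 0 ∨ t0 ≠ 0) ∧ s0 * L1 + t0 * L2 = 0 ∧ s0 * L1' + t0 * L2' = 0 := by
      by_cases h1 : L1 ≠ 0
      · exact ⟨L2, -L1, Or.inr (neg_ne_zero.mpr h1), by ring, by linear_combination -hdet⟩
      · by_cases h1' : L1' ≠ 0
        · exact ⟨L2', -L1', Or.inr (neg_ne_zero.mpr h1'), by linear_combination hdet, by ring⟩
        · push_neg at h1 h1'
          exact ⟨1, 0, Or.inl one_ne_zero, by rw [h1]; ring, by rw [h1']; ring⟩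
    refine ⟨s0, t0, u0, v0, hst, huv, fun i => ?_⟩
    have hker : span k (Set.range ![vA M, vB M, vA M', vB M'])
        ≤ LinearMap.ker (EvL s0 t0 u0 v0) := by
      rw [span_le]
      rintro _ ⟨j, rfl⟩
      fin_cases j <;> simp only [LinearMap.mem_ker, Matrix.cons_val_zero, Matrix.cons_val_one,
        Matrix.head_cons, SetLike.mem_coe]
      · show EvL s0 t0 u0 v0 (vA M) = 0
        simp only [EvL, vA, LinearMap.coe_mk, AddHom.coe_mk, Matrix.cons_val_zero,
          Matrix.cons_val_one, Matrix.head_cons]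
        show (M 0 * u0 + M 1 * v0) * s0 ^ 2 + (M 2 * u0 + M 3 * v0) * (s0 * t0)
            + ((0 : k) * u0 + 0 * v0) * t0 ^ 2 = 0
        rw [← hL1def, ← hL2def]
        linear_combination s0 * hE1
      · show EvL s0 t0 u0 v0 (vB M) = 0
        show ((0 : k) * u0 + 0 * v0) * s0 ^ 2 + (M 0 * u0 + M 1 * v0) * (s0 * t0)
            + (M 2 * u0 + M 3 * v0) * t0 ^ 2 = 0
        rw [← hL1def, ← hL2def]
        linear_combination t0 * hE1
      · show EvL s0 t0 u0 v0 (vA M') = 0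
        show (M' 0 * u0 + M' 1 * v0) * s0 ^ 2 + (M' 2 * u0 + M' 3 * v0) * (s0 * t0)
            + ((0 : k) * u0 + 0 * v0) * t0 ^ 2 = 0
        rw [← hL1'def, ← hL2'def]
        linear_combination s0 * hE2
      · show EvL s0 t0 u0 v0 (vB M') = 0
        show ((0 : k) * u0 + 0 * v0) * s0 ^ 2 + (M' 0 * u0 + M' 1 * v0) * (s0 * t0)
            + (M' 2 * u0 + M' 3 * v0) * t0 ^ 2 = 0
        rw [← hL1'def, ← hL2'def]
        linear_combination t0 * hE2
    have hCi : C i ∈ W := subset_span ⟨i, rfl⟩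
    rw [← heq] at hCi
    exact hker hCi
  · rw [Fintype.not_linearIndependent_iff] at hind
    obtain ⟨g, hg, i0, hi0⟩ := hind
    rw [Fin.sum_univ_four] at hg
    have hcomp : ∀ jj : Fin 6,
        g 0 * vA M jj + g 1 * vB M jj + g 2 * vA M' jj + g 3 * vB M' jj = 0 :=
      fun jj => congrFun hg jj
    have eq0 : g 0 * M 0 + g 1 * 0 + g 2 * M' 0 + g 3 * 0 = 0 := hcomp 0
    have eq1 : g 0 * M 1 + g 1 * 0 + g 2 * M' 1 + g 3 * 0 = 0 := hcomp 1
    have eq2 : g 0 * M 2 + g 1 * M 0 + g 2 * M' 2 + g 3 * M' 0 = 0 := hcomp 2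
    have eq3 : g 0 * M 3 + g 1 * M 1 + g 2 * M' 3 + g 3 * M' 1 = 0 := hcomp 3
    have eq4 : g 0 * 0 + g 1 * M 2 + g 2 * 0 + g 3 * M' 2 = 0 := hcomp 4
    have eq5 : g 0 * 0 + g 1 * M 3 + g 2 * 0 + g 3 * M' 3 = 0 := hcomp 5
    have heq0 : g 0 * M 0 + g 2 * M' 0 = 0 := by linear_combination eq0
    have heq1 : g 0 * M 1 + g 2 * M' 1 = 0 := by linear_combination eq1
    have heq4 : g 1 * M 2 + g 3 * M' 2 = 0 := by linear_combination eq4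
    have heq5 : g 1 * M 3 + g 3 * M' 3 = 0 := by linear_combination eq5
    set e : k := g 0 * M 2 + g 2 * M' 2 with hedef
    set f : k := g 0 * M 3 + g 2 * M' 3 with hfdef
    have heq2 : g 1 * M 0 + g 3 * M' 0 = -e := by rw [hedef]; linear_combination eq2
    have heq3 : g 1 * M 1 + g 3 * M' 1 = -f := by rw [hfdef]; linear_combination eq3
    have hpair := LinearIndependent.pair_iff.mp hMM'
    have hef : ¬(e = 0 ∧ f = 0) := by
      rintro ⟨he, hf⟩
      have hz1 : g 0 • M + g 2 • M' = 0 := by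
        funext jj; fin_cases jj
        · exact heq0
        · exact heq1
        · show g 0 * M 2 + g 2 * M' 2 = 0; rw [← hedef]; exact he
        · show g 0 * M 3 + g 2 * M' 3 = 0; rw [← hfdef]; exact hf
      obtain ⟨hg0, hg2⟩ := hpair _ _ hz1
      have hz2 : g 1 • M + g 3 • M' = 0 := by
        funext jj; fin_cases jj
        · show g 1 * M 0 + g 3 * M' 0 = 0; rw [heq2, he, neg_zero]
        · show g 1 * M 1 + g 3 * M' 1 = 0; rw [heq3, hf, neg_zero]
        · exact heq4
        · exact heq5
      obtain ⟨hg1, hg3⟩ := hpair _ _ hz2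
      fin_cases i0
      · exact hi0 hg0
      · exact hi0 hg1
      · exact hi0 hg2
      · exact hi0 hg3
    set w1 : Fin 6 → k := ![e, f, 0, 0, 0, 0] with hw1def
    set w2 : Fin 6 → k := ![0, 0, e, f, 0, 0] with hw2def
    set w3 : Fin 6 → k := ![0, 0, 0, 0, e, f] with hw3def
    have hw1 : w1 ∈ W := by
      have hrep : w1 = -(g 1 • vA M + g 3 • vA M') := by
        funext jj; fin_cases jj
        · show e = -(g 1 * M 0 + g 3 * M' 0); rw [heq2, neg_neg]
        · show f = -(g 1 * M 1 + g 3 * M' 1); rw [heq3, neg_neg]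
        · show (0 : k) = -(g 1 * M 2 + g 3 * M' 2); rw [heq4, neg_zero]
        · show (0 : k) = -(g 1 * M 3 + g 3 * M' 3); rw [heq5, neg_zero]
        · show (0 : k) = -(g 1 * 0 + g 3 * 0); ring
        · show (0 : k) = -(g 1 * 0 + g 3 * 0); ring
      rw [hrep]
      exact neg_mem (add_mem (smul_mem _ _ hAM) (smul_mem _ _ hAM'))
    have hw2 : w2 ∈ W := by
      have hrep : w2 = g 0 • vA M + g 2 • vA M' := by
        funext jj; fin_cases jj
        · show (0 : k) = g 0 * M 0 + g 2 * M' 0; rw [heq0]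
        · show (0 : k) = g 0 * M 1 + g 2 * M' 1; rw [heq1]
        · exact hedef
        · exact hfdef
        · show (0 : k) = g 0 * 0 + g 2 * 0; ring
        · show (0 : k) = g 0 * 0 + g 2 * 0; ring
      rw [hrep]
      exact add_mem (smul_mem _ _ hAM) (smul_mem _ _ hAM')
    have hw3 : w3 ∈ W := by
      have hrep : w3 = g 0 • vB M + g 2 • vB M' := by
        funext jj; fin_cases jj
        · show (0 : k) = g 0 * 0 + g 2 * 0; ring
        · show (0 : k) = g 0 * 0 + g 2 * 0; ring
        · show (0 : k) = g 0 * M 0 + g 2 * M' 0; rw [heq0]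
        · show (0 : k) = g 0 * M 1 + g 2 * M' 1; rw [heq1]
        · exact hedef
        · exact hfdef
      rw [hrep]
      exact add_mem (smul_mem _ _ hBM) (smul_mem _ _ hBM')
    have li3 : LinearIndependent k ![w1, w2, w3] := by
      rw [Fintype.linearIndependent_iff]
      intro h hsum
      rw [Fin.sum_univ_three] at hsum
      have k0 : h 0 * e + h 1 * 0 + h 2 * 0 = 0 := congrFun hsum 0
      have k1 : h 0 * f + h 1 * 0 + h 2 * 0 = 0 := congrFun hsum 1
      have k2 : h 0 * 0 + h 1 * e + h 2 * 0 = 0 := congrFun hsum 2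
      have k3 : h 0 * 0 + h 1 * f + h 2 * 0 = 0 := congrFun hsum 3
      have k4 : h 0 * 0 + h 1 * 0 + h 2 * e = 0 := congrFun hsum 4
      have k5 : h 0 * 0 + h 1 * 0 + h 2 * f = 0 := congrFun hsum 5
      have k0' : h 0 * e = 0 := by linear_combination k0
      have k1' : h 0 * f = 0 := by linear_combination k1
      have k2' : h 1 * e = 0 := by linear_combination k2
      have k3' : h 1 * f = 0 := by linear_combination k3
      have k4' : h 2 * e = 0 := by linear_combination k4
      have k5' : h 2 * f = 0 := by linear_combination k5
      have solve : ∀ x : k, x * e = 0 → x * f = 0 → x = 0 := by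
        intro x hx1 hx2
        rcases not_and_or.mp hef with hne | hne
        · rcases mul_eq_zero.mp hx1 with h' | h'
          · exact h'
          · exact absurd h' hne
        · rcases mul_eq_zero.mp hx2 with h' | h'
          · exact h'
          · exact absurd h' hne
      intro i; fin_cases i
      · exact solve _ k0' k1'
      · exact solve _ k2' k3'
      · exact solve _ k4' k5'
    have h3rank : Module.finrank k (span k (Set.range ![w1, w2, w3])) = 3 := by
      rw [finrank_span_eq_card li3]; simp
    have hle3 : span k (Set.range ![w1, w2, w3]) ≤ W := by
      rw [span_le]; rintro _ ⟨j, rfl⟩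
      fin_cases j
      · exact hw1
      · exact hw2
      · exact hw3
    have hlt : span k (Set.range ![w1, w2, w3]) < W := by
      refine lt_of_le_of_ne hle3 (fun hEq => ?_)
      rw [hEq, hW] at h3rank
      omega
    obtain ⟨w, hwW, hwn⟩ := SetLike.exists_of_lt hlt
    obtain ⟨u0, v0, huv, hroot1⟩ := lin_root e f hef
    obtain ⟨s0, t0, hst, hroot2⟩ := quad_root (w 0 * u0 + w 1 * v0) (w 2 * u0 + w 3 * v0)
      (w 4 * u0 + w 5 * v0)
    refine ⟨s0, t0, u0, v0, hst, huv, fun i => ?_⟩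
    have hsup_le : span k (Set.range ![w1, w2, w3]) ⊔ span k {w} ≤ W :=
      sup_le hle3 ((span_singleton_le_iff_mem w W).mpr hwW)
    have hlt2 : span k (Set.range ![w1, w2, w3]) < span k (Set.range ![w1, w2, w3]) ⊔ span k {w} := by
      refine lt_of_le_of_ne le_sup_left (fun hEq => hwn ?_)
      rw [hEq]
      exact SetLike.le_def.mp le_sup_right (mem_span_singleton_self w)
    have hrank2 : 4 ≤ Module.finrank k ↥(span k (Set.range ![w1, w2, w3]) ⊔ span k {w}) := by
      have := Submodule.finrank_lt_finrank_of_lt hlt2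
      omega
    have hWeq : span k (Set.range ![w1, w2, w3]) ⊔ span k {w} = W :=
      Submodule.eq_of_le_of_finrank_le hsup_le (le_trans (le_of_eq hW) hrank2)
    have hker : W ≤ LinearMap.ker (EvL s0 t0 u0 v0) := by
      rw [← hWeq]
      apply sup_le
      · rw [span_le]; rintro _ ⟨j, rfl⟩
        simp only [SetLike.mem_coe, LinearMap.mem_ker]
        fin_cases j
        · show (e * u0 + f * v0) * s0 ^ 2 + ((0:k) * u0 + 0 * v0) * (s0 * t0)
            + ((0:k) * u0 + 0 * v0) * t0 ^ 2 = 0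
          linear_combination s0 ^ 2 * hroot1
        · show ((0:k) * u0 + 0 * v0) * s0 ^ 2 + (e * u0 + f * v0) * (s0 * t0)
            + ((0:k) * u0 + 0 * v0) * t0 ^ 2 = 0
          linear_combination (s0 * t0) * hroot1
        · show ((0:k) * u0 + 0 * v0) * s0 ^ 2 + ((0:k) * u0 + 0 * v0) * (s0 * t0)
            + (e * u0 + f * v0) * t0 ^ 2 = 0
          linear_combination t0 ^ 2 * hroot1
      · rw [span_le, Set.singleton_subset_iff]
        simp only [SetLike.mem_coe, LinearMap.mem_ker]
        exact hroot2
    exact hker (subset_span ⟨i, rfl⟩)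



end Stmt3

/-- If U is basepoint free, the space of bidegree (1,0) syzygies has
dimension at most one. -/
theorem statement3 {k : Type*} [Field k] [IsAlgClosed k]
    (p : Fin 4 → MvPolynomial (Fin 4) k)
    (hli : LinearIndependent k p)
    (hdeg : ∀ i, p i ∈ biDeg k 2 1)
    (hbpf : (Ideal.span (Set.range p)).radical =
      Ideal.span {X 0, X 1} ⊓ Ideal.span {X 2, X 3}) :
    Module.rank k ↥(Syz p 1 0) ≤ 1 := by
  classical
  by_contra hrank
  push_neg at hrank
  open Stmt3 in
  have hnt : Nontrivial ↥(Syz p 1 0) := by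
    rw [← rank_pos_iff_nontrivial (R := k) (M := ↥(Syz p 1 0))]
    exact lt_trans zero_lt_one hrank
  obtain ⟨x0, hx0⟩ := exists_ne (0 : ↥(Syz p 1 0))
  obtain ⟨y0, hxy⟩ := exists_linearIndependent_pair_of_one_lt_rank hrank hx0
  have hli2 : LinearIndependent k
      ![(x0 : Fin 4 → MvPolynomial (Fin 4) k), (y0 : Fin 4 → MvPolynomial (Fin 4) k)] := by
    have h := hxy.map' (Syz p 1 0).subtype (Submodule.ker_subtype _)
    have hfun : (Syz p 1 0).subtype ∘ ![x0, y0]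
        = ![(x0 : Fin 4 → MvPolynomial (Fin 4) k), (y0 : Fin 4 → MvPolynomial (Fin 4) k)] := by
      funext z; fin_cases z <;> rfl
    rwa [hfun] at h
  have hx2 : (x0 : Fin 4 → MvPolynomial (Fin 4) k)
      ∈ (Submodule.pi Set.univ fun _ => biDeg k 1 0) ⊓ LinearMap.ker (syzMap p) := x0.2
  have hy2 : (y0 : Fin 4 → MvPolynomial (Fin 4) k)
      ∈ (Submodule.pi Set.univ fun _ => biDeg k 1 0) ⊓ LinearMap.ker (syzMap p) := y0.2
  obtain ⟨hx_pi, hx_ker⟩ := Submodule.mem_inf.mp hx2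
  obtain ⟨hy_pi, hy_ker⟩ := Submodule.mem_inf.mp hy2
  set Cp : Fin 4 → Fin 6 → k := fun i j => coeff (Stmt3.mexp j) (p i) with hCpdef
  have hrep : ∀ i, p i = Stmt3.Phi (Cp i) := fun i => Stmt3.rep21 (p i) (hdeg i)
  have hCp : LinearIndependent k Cp := by
    have hpc : p = fun i => Stmt3.PhiL (Cp i) := funext hrep
    rw [hpc] at hli
    exact LinearIndependent.of_comp Stmt3.PhiL hli
  have process : ∀ ℓ : Fin 4 → MvPolynomial (Fin 4) k,
      (∀ i, ℓ i ∈ biDeg k 1 0) → (∑ i, ℓ i * p i) = 0 →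
      ∃ (a b M : Fin 4 → k),
        (∀ i, ℓ i = a i • X 0 + b i • X 1) ∧
        (∑ i, a i • Cp i) = Stmt3.vB M ∧ (∑ i, b i • Cp i) = -(Stmt3.vA M) := by
    intro ℓ hpi hker
    set a : Fin 4 → k := fun i => coeff (Finsupp.single 0 1) (ℓ i) with hadef
    set b : Fin 4 → k := fun i => coeff (Finsupp.single 1 1) (ℓ i) with hbdef
    have hl : ∀ i, ℓ i = a i • X 0 + b i • X 1 := fun i => Stmt3.rep10 _ (hpi i)
    set cA : Fin 6 → k := ∑ i, a i • Cp i with hcAdef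
    set cB : Fin 6 → k := ∑ i, b i • Cp i with hcBdef
    have hmul : X 0 * Stmt3.Phi cA + X 1 * Stmt3.Phi cB = 0 := by
      rw [hcAdef, hcBdef, ← Stmt3.Phi_sum_smul, ← Stmt3.Phi_sum_smul]
      calc X 0 * ∑ i, a i • Stmt3.Phi (Cp i) + X 1 * ∑ i, b i • Stmt3.Phi (Cp i)
          = ∑ i, (a i • X 0 + b i • X 1) * Stmt3.Phi (Cp i) := by
            rw [Finset.mul_sum, Finset.mul_sum, ← Finset.sum_add_distrib]
            refine Finset.sum_congr rfl fun i _ => ?_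
            rw [add_mul, smul_mul_assoc, smul_mul_assoc, mul_smul_comm, mul_smul_comm]
        _ = ∑ i, ℓ i * p i := by
            refine Finset.sum_congr rfl fun i _ => ?_
            rw [← hl i, ← hrep i]
        _ = 0 := hker
    obtain ⟨e0, e1, e2, e3, e4, e5, e6, e7⟩ := Stmt3.extract cA cB hmul
    refine ⟨a, b, ![cA 2, cA 3, cA 4, cA 5], hl, ?_, ?_⟩
    · funext jj; fin_cases jj
      · exact e0
      · exact e1
      · rfl
      · rfl
      · rfl
      · rfl
    · funext jj; fin_cases jj
      · show cB 0 = -(cA 2); rw [e2, neg_neg]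
      · show cB 1 = -(cA 3); rw [e3, neg_neg]
      · show cB 2 = -(cA 4); rw [e4, neg_neg]
      · show cB 3 = -(cA 5); rw [e5, neg_neg]
      · show cB 4 = -(0 : k); rw [neg_zero]; exact e6
      · show cB 5 = -(0 : k); rw [neg_zero]; exact e7
  have hx_pi' : ∀ i, (x0 : Fin 4 → MvPolynomial (Fin 4) k) i ∈ biDeg k 1 0 :=
    fun i => (Submodule.mem_pi.mp hx_pi) i (Set.mem_univ i)
  have hy_pi' : ∀ i, (y0 : Fin 4 → MvPolynomial (Fin 4) k) i ∈ biDeg k 1 0 :=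
    fun i => (Submodule.mem_pi.mp hy_pi) i (Set.mem_univ i)
  have hx_ker' : (∑ i, (x0 : Fin 4 → MvPolynomial (Fin 4) k) i * p i) = 0 :=
    LinearMap.mem_ker.mp hx_ker
  have hy_ker' : (∑ i, (y0 : Fin 4 → MvPolynomial (Fin 4) k) i * p i) = 0 :=
    LinearMap.mem_ker.mp hy_ker
  obtain ⟨a, b, M, hla, hcAM, hcBM⟩ := process _ hx_pi' hx_ker'
  obtain ⟨a', b', M', hla', hcAM', hcBM'⟩ := process _ hy_pi' hy_ker'
  have hspan : ∀ c : Fin 4 → k,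
      (∑ i, c i • Cp i) ∈ Submodule.span k (Set.range Cp) :=
    fun c => Submodule.sum_mem _ fun i _ =>
      Submodule.smul_mem _ _ (Submodule.subset_span ⟨i, rfl⟩)
  have hBMmem : Stmt3.vB M ∈ Submodule.span k (Set.range Cp) := hcAM ▸ hspan a
  have hBM'mem : Stmt3.vB M' ∈ Submodule.span k (Set.range Cp) := hcAM' ▸ hspan a'
  have hAMmem : Stmt3.vA M ∈ Submodule.span k (Set.range Cp) := by
    have h := hspan b; rw [hcBM] at h; exact neg_mem_iff.mp h
  have hAM'mem : Stmt3.vA M' ∈ Submodule.span k (Set.range Cp) := by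
    have h := hspan b'; rw [hcBM'] at h; exact neg_mem_iff.mp h
  have hMM' : LinearIndependent k ![M, M'] := by
    rw [LinearIndependent.pair_iff]
    intro x y hxyz
    have hcomb : ∀ (c c' : Fin 4 → k),
        ∑ i, (x * c i + y * c' i) • Cp i
          = x • (∑ i, c i • Cp i) + y • (∑ i, c' i • Cp i) := by
      intro c c'
      rw [Finset.smul_sum, Finset.smul_sum, ← Finset.sum_add_distrib]
      refine Finset.sum_congr rfl fun i _ => ?_
      rw [add_smul, smul_smul, smul_smul]
    have hcM : ∀ jj : Fin 4, x * M jj + y * M' jj = 0 := fun jj => congrFun hxyz jj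
    have hA0 : ∑ i, (x * a i + y * a' i) • Cp i = 0 := by
      rw [hcomb, hcAM, hcAM']
      funext jj; fin_cases jj
      · show x * (0 : k) + y * 0 = 0; ring
      · show x * (0 : k) + y * 0 = 0; ring
      · exact hcM 0
      · exact hcM 1
      · exact hcM 2
      · exact hcM 3
    have hB0 : ∑ i, (x * b i + y * b' i) • Cp i = 0 := by
      rw [hcomb, hcBM, hcBM']
      funext jj; fin_cases jj
      · show x * -(M 0) + y * -(M' 0) = 0; linear_combination -(hcM 0)
      · show x * -(M 1) + y * -(M' 1) = 0; linear_combination -(hcM 1)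
      · show x * -(M 2) + y * -(M' 2) = 0; linear_combination -(hcM 2)
      · show x * -(M 3) + y * -(M' 3) = 0; linear_combination -(hcM 3)
      · show x * -(0 : k) + y * -(0 : k) = 0; ring
      · show x * -(0 : k) + y * -(0 : k) = 0; ring
    have hax : ∀ i, x * a i + y * a' i = 0 := Fintype.linearIndependent_iff.mp hCp _ hA0
    have hbx : ∀ i, x * b i + y * b' i = 0 := Fintype.linearIndependent_iff.mp hCp _ hB0
    have hz : x • (x0 : Fin 4 → MvPolynomial (Fin 4) k)
        + y • (y0 : Fin 4 → MvPolynomial (Fin 4) k) = 0 := by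
      funext i
      show x • (x0 : Fin 4 → MvPolynomial (Fin 4) k) i
        + y • (y0 : Fin 4 → MvPolynomial (Fin 4) k) i = 0
      rw [hla i, hla' i, smul_add, smul_add, smul_smul, smul_smul, smul_smul, smul_smul,
        add_add_add_comm, ← add_smul, ← add_smul, hax i, hbx i, zero_smul, zero_smul, add_zero]
    exact LinearIndependent.pair_iff.mp hli2 x y hz
  obtain ⟨s0, t0, u0, v0, hst, huv, hE⟩ :=
    Stmt3.key Cp hCp M M' hMM' hAMmem hBMmem hAM'mem hBM'mem
  have hvan : ∀ i, aeval ![s0, t0, u0, v0] (p i) = 0 := by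
    intro i
    rw [hrep i, Stmt3.aeval_Phi]
    exact hE i
  set F : MvPolynomial (Fin 4) k →ₐ[k] k := aeval ![s0, t0, u0, v0] with hFdef
  have hsp : Ideal.span (Set.range p) ≤ RingHom.ker F.toRingHom := by
    rw [Ideal.span_le]
    rintro _ ⟨i, rfl⟩
    exact hvan i
  have hprime : (RingHom.ker F.toRingHom).IsPrime := RingHom.ker_isPrime _
  have hradle : (Ideal.span (Set.range p)).radical ≤ RingHom.ker F.toRingHom :=
    hprime.radical_le_iff.mpr hsp
  rw [hbpf] at hradle
  have hprod : ∀ i j : Fin 4, i = 0 ∨ i = 1 → j = 2 ∨ j = 3 →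
      (![s0, t0, u0, v0] i) * (![s0, t0, u0, v0] j) = 0 := by
    intro i j hi hj
    have hmemI : (X i * X j : MvPolynomial (Fin 4) k)
        ∈ Ideal.span {X 0, X 1} ⊓ Ideal.span {X 2, X 3} := by
      refine Submodule.mem_inf.mpr ⟨?_, ?_⟩
      · refine Ideal.mul_mem_right _ _ (Ideal.subset_span ?_)
        rcases hi with h | h <;> subst h <;> simp
      · refine Ideal.mul_mem_left _ _ (Ideal.subset_span ?_)
        rcases hj with h | h <;> subst h <;> simp
    have := hradle hmemI
    rw [RingHom.mem_ker] at this
    simp only [hFdef, AlgHom.toRingHom_eq_coe, RingHom.coe_coe, map_mul, aeval_X] at this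
    exact this
  have e02 := hprod 0 2 (Or.inl rfl) (Or.inl rfl)
  have e03 := hprod 0 3 (Or.inl rfl) (Or.inr rfl)
  have e12 := hprod 1 2 (Or.inr rfl) (Or.inl rfl)
  have e13 := hprod 1 3 (Or.inr rfl) (Or.inr rfl)
  simp only [Matrix.cons_val_zero, Matrix.cons_val_one, Matrix.head_cons] at e02 e03 e12 e13
  rcases hst with hs | ht <;> rcases huv with hu | hv
  · rcases mul_eq_zero.mp e02 with h | h
    · exact hs h
    · exact hu h
  · rcases mul_eq_zero.mp e03 with h | h
    · exact hs h
    · exact hv h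
  · rcases mul_eq_zero.mp e12 with h | h
    · exact ht h
    · exact hu h
  · rcases mul_eq_zero.mp e13 with h | h
    · exact ht h
    · exact hv h
end
end

section
/- Suppose U is basepoint free. Then the space Syz_{(0,1)} of bidegree (0,1) syzygies on p_0,…,p_3 has dimension at least 2 if and only if there exist bihomogeneous polynomials q_1, q_2 of bidegree (2,0) with radical of ⟨q_1,q_2⟩ equal to ⟨s,t⟩ such that I_U = ⟨u,v⟩ ∩ ⟨q_1,q_2⟩. -/
open MvPolynomial

noncomputable section

namespace St5

variable {k : Type*} [Field k]

abbrev R4 (k : Type*) [Field k] := MvPolynomial (Fin 4) k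

/-- the weight function defining the bigrading -/
def w4 : Fin 4 → ℕ × ℕ := ![(1,0),(1,0),(0,1),(0,1)]

lemma mem_biDeg {m n : ℕ} {f : R4 k} :
    f ∈ biDeg k m n ↔ ∀ d ∈ f.support, d 0 + d 1 = m ∧ d 2 + d 3 = n := Iff.rfl

lemma weight_w4 (d : Fin 4 →₀ ℕ) : Finsupp.weight w4 d = (d 0 + d 1, d 2 + d 3) := by
  rw [Finsupp.weight_apply, Finsupp.sum_fintype]
  · rw [Fin.sum_univ_four]
    simp [w4, Prod.ext_iff]
  · intro i; simp

lemma mem_biDeg_iff {m n : ℕ} {f : R4 k} :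
    f ∈ biDeg k m n ↔ f.IsWeightedHomogeneous w4 (m, n) := by
  constructor
  · intro h d hd
    obtain ⟨h1, h2⟩ := h d (mem_support_iff.2 hd)
    rw [weight_w4, h1, h2]
  · intro h d hd
    have := h (mem_support_iff.1 hd)
    rw [weight_w4, Prod.ext_iff] at this
    exact this
lemma whc_mul {a b m n : ℕ} {q : R4 k} (hq : q.IsWeightedHomogeneous w4 (m, n))
    (g : R4 k) :
    weightedHomogeneousComponent w4 (a + m, b + n) (g * q) =
      weightedHomogeneousComponent w4 (a, b) g * q := by
  induction g using MvPolynomial.induction_on' with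
  | add f g hf hg => rw [add_mul, map_add, map_add, hf, hg, add_mul]
  | monomial d c =>
    by_cases hd : Finsupp.weight w4 d = (a, b)
    · have hmon : IsWeightedHomogeneous w4 (monomial d c) (a, b) :=
        isWeightedHomogeneous_monomial _ _ _ hd
      have h1 : IsWeightedHomogeneous w4 (monomial d c * q) (a + m, b + n) := hmon.mul hq
      rw [IsWeightedHomogeneous.weightedHomogeneousComponent_same h1,
        IsWeightedHomogeneous.weightedHomogeneousComponent_same hmon]
    · have hmon : IsWeightedHomogeneous w4 (monomial d c) (Finsupp.weight w4 d) :=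
        isWeightedHomogeneous_monomial _ _ _ rfl
      have hne : ((a + m, b + n) : ℕ × ℕ) ≠ Finsupp.weight w4 d + (m, n) := by
        intro h
        apply hd
        have : ((a, b) : ℕ × ℕ) + (m, n) = Finsupp.weight w4 d + (m, n) := h
        exact (add_right_cancel this).symm
      rw [IsWeightedHomogeneous.weightedHomogeneousComponent_ne _ (hmon.mul hq) hne,
        IsWeightedHomogeneous.weightedHomogeneousComponent_ne _ hmon
          (fun h => hd h.symm), zero_mul]

lemma mem_biDeg_whc (a b : ℕ) (g : R4 k) :
    weightedHomogeneousComponent w4 (a, b) g ∈ biDeg k a b :=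
  mem_biDeg_iff.2 (weightedHomogeneousComponent_isWeightedHomogeneous _ _)

lemma eq_sum_of_support_subset (f : R4 k) {s : Finset (Fin 4 →₀ ℕ)}
    (h : f.support ⊆ s) : f = ∑ d ∈ s, monomial d (coeff d f) := by
  conv_lhs => rw [MvPolynomial.as_sum f]
  exact Finset.sum_subset h fun d _ hd => by rw [notMem_support_iff.1 hd, map_zero]

lemma monomial_eq_C_mul_X {j : Fin 4} {a : k} :
    monomial (Finsupp.single j 1) a = C a * X j := by
  have hx : (X j : R4 k) = monomial (Finsupp.single j 1) 1 := rfl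
  rw [hx, C_mul_monomial, mul_one]

lemma biDeg00 {h : R4 k} (hh : h ∈ biDeg k 0 0) : h = C (coeff 0 h) := by
  have hsub : h.support ⊆ {0} := by
    intro d hd
    obtain ⟨h1, h2⟩ := hh d hd
    simp only [Finset.mem_singleton]
    ext i
    fin_cases i <;> simp <;> omega
  conv_lhs => rw [eq_sum_of_support_subset h hsub, Finset.sum_singleton]
  rw [monomial_zero']

lemma single23_ne : (Finsupp.single 2 1 : Fin 4 →₀ ℕ) ≠ Finsupp.single 3 1 := by
  intro h
  have := DFunLike.congr_fun h 2
  simp at this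

lemma biDeg01 {f : R4 k} (hf : f ∈ biDeg k 0 1) :
    f = C (coeff (Finsupp.single 2 1) f) * X 2 + C (coeff (Finsupp.single 3 1) f) * X 3 := by
  have hsub : f.support ⊆ {Finsupp.single 2 1, Finsupp.single 3 1} := by
    intro d hd
    obtain ⟨h1, h2⟩ := hf d hd
    have h0 : d 0 = 0 := by omega
    have h1' : d 1 = 0 := by omega
    rcases (by omega : d 2 = 1 ∧ d 3 = 0 ∨ d 2 = 0 ∧ d 3 = 1) with ⟨ha, hb⟩ | ⟨ha, hb⟩
    · have hd2 : d = Finsupp.single 2 1 := by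
        ext i; fin_cases i <;> simp [Finsupp.single_apply, h0, h1', ha, hb]
      simp [hd2]
    · have hd3 : d = Finsupp.single 3 1 := by
        ext i; fin_cases i <;> simp [Finsupp.single_apply, h0, h1', ha, hb]
      simp [hd3]
  conv_lhs => rw [eq_sum_of_support_subset f hsub, Finset.sum_pair single23_ne]
  rw [monomial_eq_C_mul_X, monomial_eq_C_mul_X]
section Aeval

lemma sub_aeval_mem (I : Ideal (R4 k)) (g : Fin 4 → R4 k)
    (hg : ∀ i, g i = X i ∨ (g i = 0 ∧ X i ∈ I)) (f : R4 k) :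
    f - aeval g f ∈ I := by
  induction f using MvPolynomial.induction_on with
  | C a => simp only [aeval_C, algebraMap_eq, sub_self]; exact I.zero_mem
  | add p q hp hq =>
    have := I.add_mem hp hq
    convert this using 1
    rw [map_add]; ring
  | mul_X p i hp =>
    rcases hg i with h | ⟨h0, hmem⟩
    · have : p * X i - aeval g (p * X i) = (p - aeval g p) * X i := by
        rw [map_mul, aeval_X, h]; ring
      rw [this]
      exact I.mul_mem_right _ hp
    · rw [map_mul, aeval_X, h0, mul_zero, sub_zero]
      exact I.mul_mem_left p hmem

lemma aeval_fix (g : Fin 4 → R4 k) (f : R4 k)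
    (h : ∀ d ∈ f.support, ∀ i, d i ≠ 0 → g i = X i) : aeval g f = f := by
  have step : ∀ d ∈ f.support, aeval g (monomial d (coeff d f)) = monomial d (coeff d f) := by
    intro d hd
    rw [aeval_monomial, monomial_eq, algebraMap_eq]
    congr 1
    refine Finset.prod_congr rfl fun i hi => ?_
    show g i ^ d i = X i ^ d i
    rw [h d hd i (Finsupp.mem_support_iff.1 hi)]
  conv_lhs => rw [MvPolynomial.as_sum f]
  rw [map_sum, Finset.sum_congr rfl step, ← MvPolynomial.as_sum]

/-- substitution killing the first two variables -/
def g01 : Fin 4 → R4 k := ![0, 0, X 2, X 3]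
/-- substitution killing the last two variables -/
def g23 : Fin 4 → R4 k := ![X 0, X 1, 0, 0]
/-- substitution killing only the last variable -/
def g3 : Fin 4 → R4 k := ![X 0, X 1, X 2, 0]
/-- substitution sending the last two variables to 1 -/
def gu : Fin 4 → R4 k := ![X 0, X 1, 1, 1]

lemma hg01 : ∀ i, g01 (k := k) i = X i ∨ (g01 (k := k) i = 0 ∧
    X i ∈ Ideal.span ({X 0, X 1} : Set (R4 k))) := by
  intro i
  fin_cases i
  · exact Or.inr ⟨rfl, Ideal.subset_span (by simp)⟩
  · exact Or.inr ⟨rfl, Ideal.subset_span (by simp)⟩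
  · exact Or.inl rfl
  · exact Or.inl rfl

lemma hg23 : ∀ i, g23 (k := k) i = X i ∨ (g23 (k := k) i = 0 ∧
    X i ∈ Ideal.span ({X 2, X 3} : Set (R4 k))) := by
  intro i
  fin_cases i
  · exact Or.inl rfl
  · exact Or.inl rfl
  · exact Or.inr ⟨rfl, Ideal.subset_span (by simp)⟩
  · exact Or.inr ⟨rfl, Ideal.subset_span (by simp)⟩

lemma hg3 : ∀ i, g3 (k := k) i = X i ∨ (g3 (k := k) i = 0 ∧
    X i ∈ Ideal.span ({X 3} : Set (R4 k))) := by
  intro i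
  fin_cases i
  · exact Or.inl rfl
  · exact Or.inl rfl
  · exact Or.inl rfl
  · exact Or.inr ⟨rfl, Ideal.subset_span (by simp)⟩

lemma span01_eq_ker :
    Ideal.span ({X 0, X 1} : Set (R4 k)) = RingHom.ker (aeval (g01 (k := k))) := by
  apply le_antisymm
  · rw [Ideal.span_le]
    rintro x hx
    simp only [Set.mem_insert_iff, Set.mem_singleton_iff] at hx
    rcases hx with rfl | rfl <;> · rw [SetLike.mem_coe, RingHom.mem_ker, aeval_X]; simp [g01]
  · intro f hf
    rw [RingHom.mem_ker] at hf
    have := sub_aeval_mem (Ideal.span ({X 0, X 1} : Set (R4 k))) g01 hg01 f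
    rwa [hf, sub_zero] at this

lemma span3_eq_ker :
    Ideal.span ({X 3} : Set (R4 k)) = RingHom.ker (aeval (g3 (k := k))) := by
  apply le_antisymm
  · rw [Ideal.span_le]
    rintro x hx
    simp only [Set.mem_singleton_iff] at hx
    subst hx
    rw [SetLike.mem_coe, RingHom.mem_ker, aeval_X]; simp [g3]
  · intro f hf
    rw [RingHom.mem_ker] at hf
    have := sub_aeval_mem (Ideal.span ({X 3} : Set (R4 k))) g3 hg3 f
    rwa [hf, sub_zero] at this

lemma prime01 : (Ideal.span ({X 0, X 1} : Set (R4 k))).IsPrime := by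
  rw [span01_eq_ker]
  exact RingHom.ker_isPrime _

lemma prime3 : (Ideal.span ({X 3} : Set (R4 k))).IsPrime := by
  rw [span3_eq_ker]
  exact RingHom.ker_isPrime _

lemma X2_not_mem3 : (X 2 : R4 k) ∉ Ideal.span ({X 3} : Set (R4 k)) := by
  rw [span3_eq_ker, RingHom.mem_ker, aeval_X]
  show (g3 (k := k)) 2 ≠ 0
  have : (g3 (k := k)) 2 = X 2 := rfl
  rw [this]
  exact X_ne_zero _

lemma fix23 {m : ℕ} {q : R4 k} (hq : q ∈ biDeg k m 0) : aeval (g23 (k := k)) q = q := by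
  apply aeval_fix
  intro d hd i hdi
  obtain ⟨-, h2⟩ := hq d hd
  fin_cases i
  · rfl
  · rfl
  · exact absurd (by omega : d 2 = 0) hdi
  · exact absurd (by omega : d 3 = 0) hdi

lemma fixu {m : ℕ} {q : R4 k} (hq : q ∈ biDeg k m 0) : aeval (gu (k := k)) q = q := by
  apply aeval_fix
  intro d hd i hdi
  obtain ⟨-, h2⟩ := hq d hd
  fin_cases i
  · rfl
  · rfl
  · exact absurd (by omega : d 2 = 0) hdi
  · exact absurd (by omega : d 3 = 0) hdi

end Aeval
section IdealLemmas

lemma inter_mul {q1 q2 : R4 k} (h1 : aeval (g23 (k := k)) q1 = q1)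
    (h2 : aeval (g23 (k := k)) q2 = q2) :
    Ideal.span ({X 2, X 3} : Set (R4 k)) ⊓ Ideal.span {q1, q2} =
      Ideal.span ({X 2, X 3} : Set (R4 k)) * Ideal.span {q1, q2} := by
  refine le_antisymm ?_ Ideal.mul_le_inf
  rintro f ⟨hf1, hf2⟩
  obtain ⟨a, b, hab⟩ := Ideal.mem_span_pair.1 hf2
  have hker : aeval (g23 (k := k)) f = 0 := by
    obtain ⟨c, d, hcd⟩ := Ideal.mem_span_pair.1 hf1
    rw [← hcd, map_add, map_mul, map_mul, aeval_X, aeval_X]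
    have e2 : (g23 (k := k)) 2 = 0 := rfl
    have e3 : (g23 (k := k)) 3 = 0 := rfl
    rw [e2, e3, mul_zero, mul_zero, add_zero]
  have hzero : aeval (g23 (k := k)) a * q1 + aeval (g23 (k := k)) b * q2 = 0 := by
    have := congrArg (aeval (g23 (k := k))) hab
    rwa [map_add, map_mul, map_mul, h1, h2, hker] at this
  have key : f = (a - aeval (g23 (k := k)) a) * q1 + (b - aeval (g23 (k := k)) b) * q2 := by
    linear_combination hzero - hab
  rw [key]
  refine Ideal.add_mem _ ?_ ?_
  · exact Ideal.mul_mem_mul (sub_aeval_mem _ g23 hg23 a) (Ideal.subset_span (by simp))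
  · exact Ideal.mul_mem_mul (sub_aeval_mem _ g23 hg23 b) (Ideal.subset_span (by simp))

lemma monomial_mem_span01 (d : Fin 4 →₀ ℕ) (c : k) (h : d 0 ≠ 0 ∨ d 1 ≠ 0) :
    monomial d c ∈ Ideal.span ({X 0, X 1} : Set (R4 k)) := by
  rcases h with h | h
  · have hle : Finsupp.single (0 : Fin 4) 1 ≤ d :=
      Finsupp.single_le_iff.2 (Nat.one_le_iff_ne_zero.2 h)
    have : monomial d c = X 0 * monomial (d - Finsupp.single 0 1) c := by
      have hx : (X 0 : R4 k) = monomial (Finsupp.single 0 1) 1 := rfl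
      rw [hx, monomial_mul, one_mul, add_tsub_cancel_of_le hle]
    rw [this]
    exact Ideal.mul_mem_right _ _ (Ideal.subset_span (by simp))
  · have hle : Finsupp.single (1 : Fin 4) 1 ≤ d :=
      Finsupp.single_le_iff.2 (Nat.one_le_iff_ne_zero.2 h)
    have : monomial d c = X 1 * monomial (d - Finsupp.single 1 1) c := by
      have hx : (X 1 : R4 k) = monomial (Finsupp.single 1 1) 1 := rfl
      rw [hx, monomial_mul, one_mul, add_tsub_cancel_of_le hle]
    rw [this]
    exact Ideal.mul_mem_right _ _ (Ideal.subset_span (by simp))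

lemma q_mem01 {q : R4 k} (hq : q ∈ biDeg k 2 0) :
    q ∈ Ideal.span ({X 0, X 1} : Set (R4 k)) := by
  nth_rewrite 1 [MvPolynomial.as_sum q]
  refine Ideal.sum_mem _ fun d hd => ?_
  obtain ⟨h1, -⟩ := hq d hd
  exact monomial_mem_span01 d _ (by omega)

lemma span_k_le_ideal {s : Set (R4 k)} {x : R4 k} (h : x ∈ Submodule.span k s) :
    x ∈ Ideal.span s := by
  have hle : Submodule.span k s ≤ (Ideal.span s).restrictScalars k :=
    Submodule.span_le.2 Ideal.subset_span
  exact hle h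

end IdealLemmas

section BiDegLemmas

lemma X_mul_mem_biDeg {m n : ℕ} {q : R4 k} {j : Fin 4} (hj : j = 2 ∨ j = 3)
    (hq : q ∈ biDeg k m n) : X j * q ∈ biDeg k m (n + 1) := by
  rw [mem_biDeg]
  intro d hd
  rw [support_X_mul] at hd
  obtain ⟨e, he, rfl⟩ := Finset.mem_map.1 hd
  obtain ⟨h1, h2⟩ := hq e he
  rcases hj with rfl | rfl <;>
    · constructor <;> simp [addLeftEmbedding_apply, Finsupp.single_apply] <;> omega

lemma biDeg_of_X3_mul {m n : ℕ} {q : R4 k} (h : X 3 * q ∈ biDeg k m (n + 1)) :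
    q ∈ biDeg k m n := by
  rw [mem_biDeg]
  intro d hd
  have hmem : Finsupp.single (3 : Fin 4) 1 + d ∈ (X 3 * q).support := by
    rw [support_X_mul]
    exact Finset.mem_map.2 ⟨d, hd, rfl⟩
  obtain ⟨h1, h2⟩ := h _ hmem
  simp [Finsupp.add_apply, Finsupp.single_apply] at h1 h2
  constructor <;> omega

lemma eq_zero_of_X2_X3 {A B : R4 k} (hA : A ∈ biDeg k 2 0) (hB : B ∈ biDeg k 2 0)
    (h : X 2 * A + X 3 * B = 0) : A = 0 ∧ B = 0 := by
  have hA0 : A = 0 := by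
    ext d
    rw [coeff_zero]
    by_cases hd : d ∈ A.support
    · have hd3 : d 3 = 0 := by have := (hA d hd).2; omega
      have e1 : coeff (Finsupp.single 2 1 + d) (X 2 * A) = coeff d A := coeff_X_mul _ _ _
      have e2 : coeff (Finsupp.single 2 1 + d) (X 3 * B) = 0 := by
        rw [← notMem_support_iff]
        intro hmem
        rw [support_X_mul] at hmem
        obtain ⟨e, he, heq⟩ := Finset.mem_map.1 hmem
        have := DFunLike.congr_fun heq 3
        simp [addLeftEmbedding_apply, Finsupp.single_apply] at this
        omega
      have := congrArg (coeff (Finsupp.single 2 1 + d)) h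
      rw [coeff_add, e1, e2, add_zero, coeff_zero] at this
      exact this
    · exact notMem_support_iff.1 hd
  refine ⟨hA0, ?_⟩
  rw [hA0, mul_zero, zero_add] at h
  rcases mul_eq_zero.1 h with h' | h'
  · exact absurd h' (X_ne_zero _)
  · exact h'

end BiDegLemmas
section Piece

lemma piece {p : Fin 4 → R4 k} (hdeg : ∀ i, p i ∈ biDeg k 2 1) {f : R4 k}
    (hf : f ∈ Ideal.span (Set.range p)) (hf2 : f ∈ biDeg k 2 1) :
    f ∈ Submodule.span k (Set.range p) := by
  obtain ⟨c, hc⟩ := Ideal.mem_span_range_iff_exists_fun.1 hf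
  have hf' : weightedHomogeneousComponent w4 (2, 1) f = f :=
    (mem_biDeg_iff.1 hf2).weightedHomogeneousComponent_same
  rw [← hf', ← hc, map_sum]
  refine Submodule.sum_mem _ fun i _ => ?_
  have e1 : weightedHomogeneousComponent w4 (2, 1) (c i * p i) =
      weightedHomogeneousComponent w4 (0, 0) (c i) * p i :=
    whc_mul (mem_biDeg_iff.1 (hdeg i)) (c i)
  rw [e1, biDeg00 (mem_biDeg_whc 0 0 (c i)), ← smul_eq_C_mul]
  exact Submodule.smul_mem _ _ (Submodule.subset_span ⟨i, rfl⟩)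

lemma piece_single {q f : R4 k} (hq : q ∈ biDeg k 2 0) (hf : f ∈ Ideal.span {q})
    (hf2 : f ∈ biDeg k 2 1) :
    f ∈ Submodule.span k ({X 2 * q, X 3 * q} : Set (R4 k)) := by
  obtain ⟨g, hg⟩ := Ideal.mem_span_singleton'.1 hf
  have hf' : weightedHomogeneousComponent w4 (2, 1) f = f :=
    (mem_biDeg_iff.1 hf2).weightedHomogeneousComponent_same
  rw [← hf', ← hg]
  have e1 : weightedHomogeneousComponent w4 (2, 1) (g * q) =
      weightedHomogeneousComponent w4 (0, 1) g * q :=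
    whc_mul (mem_biDeg_iff.1 hq) g
  rw [e1, biDeg01 (mem_biDeg_whc 0 1 g)]
  set α := coeff (Finsupp.single 2 1) (weightedHomogeneousComponent w4 (0, 1) g)
  set β := coeff (Finsupp.single 3 1) (weightedHomogeneousComponent w4 (0, 1) g)
  have : (C α * X 2 + C β * X 3) * q = α • (X 2 * q) + β • (X 3 * q) := by
    rw [smul_eq_C_mul, smul_eq_C_mul]; ring
  rw [this]
  exact Submodule.add_mem _
    (Submodule.smul_mem _ _ (Submodule.subset_span (Set.mem_insert _ _)))
    (Submodule.smul_mem _ _ (Submodule.subset_span (Set.mem_insert_of_mem _ rfl)))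

end Piece

section Rank

lemma exists_indep_pair {M : Type*} [AddCommGroup M] [Module k M]
    (h : 2 ≤ Module.rank k M) :
    ∃ x y : M, ∀ a b : k, a • x + b • y = 0 → a = 0 ∧ b = 0 := by
  have hx : ∃ x : M, x ≠ 0 := by
    by_contra hc
    push_neg at hc
    rw [rank_zero_iff_forall_zero.2 hc] at h
    norm_num at h
  obtain ⟨x, hx⟩ := hx
  by_cases hy : ∀ y : M, y ∈ Submodule.span k {x}
  · exfalso
    have htop : (Submodule.span k {x} : Submodule k M) = ⊤ := eq_top_iff.2 fun y _ => hy y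
    have h1 : Module.rank k M ≤ 1 := by
      rw [← rank_top k M, ← htop]
      exact (rank_span_le _).trans_eq (Cardinal.mk_singleton _)
    have h2 : (2 : Cardinal) ≤ 1 := h.trans h1
    norm_num at h2
  · push_neg at hy
    obtain ⟨y, hy⟩ := hy
    refine ⟨x, y, fun a b hab => ?_⟩
    by_cases hb : b = 0
    · subst hb
      rw [zero_smul, add_zero] at hab
      rcases smul_eq_zero.1 hab with h' | h'
      · exact ⟨h', rfl⟩
      · exact absurd h' hx
    · exfalso
      apply hy
      rw [Submodule.mem_span_singleton]
      refine ⟨-(b⁻¹ * a), ?_⟩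
      have hby : b • y = -(a • x) := by
        rw [add_comm] at hab
        exact eq_neg_of_add_eq_zero_left hab
      calc (-(b⁻¹ * a)) • x = b⁻¹ • -(a • x) := by
            rw [neg_smul, mul_smul, smul_neg]
        _ = b⁻¹ • (b • y) := by rw [hby]
        _ = y := by rw [smul_smul, inv_mul_cancel₀ hb, one_smul]

lemma two_le_rank_of_pair {M : Type*} [AddCommGroup M] [Module k M] {x y : M}
    (h : ∀ a b : k, a • x + b • y = 0 → a = 0 ∧ b = 0) : 2 ≤ Module.rank k M := by
  have hli : LinearIndependent k ![x, y] := LinearIndependent.pair_iff.2 h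
  have := hli.cardinal_lift_le_rank
  simpa using this

end Rank

section Syzygy

lemma mem_Syz_iff {p ℓ : Fin 4 → R4 k} {a b : ℕ} :
    ℓ ∈ Syz p a b ↔ (∀ i, ℓ i ∈ biDeg k a b) ∧ ∑ i, ℓ i * p i = 0 := by
  rw [Syz, Submodule.mem_inf]
  constructor
  · rintro ⟨h1, h2⟩
    exact ⟨fun i => h1 i trivial, h2⟩
  · rintro ⟨h1, h2⟩
    exact ⟨fun i _ => h1 i, h2⟩

lemma syz_extract {p : Fin 4 → R4 k} (hdeg : ∀ i, p i ∈ biDeg k 2 1) {ℓ : Fin 4 → R4 k}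
    (hmem : ℓ ∈ Syz p 0 1) :
    ∃ w : R4 k, w ∈ biDeg k 2 0 ∧
      X 3 * w = ∑ i, coeff (Finsupp.single 2 1) (ℓ i) • p i ∧
      X 2 * w = -∑ i, coeff (Finsupp.single 3 1) (ℓ i) • p i := by
  obtain ⟨hcomp, hsum⟩ := mem_Syz_iff.1 hmem
  set α := fun i => coeff (Finsupp.single 2 1) (ℓ i) with hα
  set β := fun i => coeff (Finsupp.single 3 1) (ℓ i) with hβ
  set P := ∑ i, α i • p i with hP
  set Q := ∑ i, β i • p i with hQdef
  have hPQ : X 2 * P + X 3 * Q = 0 := by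
    rw [← hsum, hP, hQdef, Finset.mul_sum, Finset.mul_sum, ← Finset.sum_add_distrib]
    refine (Finset.sum_congr rfl fun i _ => ?_).symm
    rw [biDeg01 (hcomp i), smul_eq_C_mul, smul_eq_C_mul]
    ring
  have hP_biDeg : P ∈ biDeg k 2 1 :=
    Submodule.sum_mem _ fun i _ => Submodule.smul_mem _ _ (hdeg i)
  have hdvd : X 2 * P ∈ Ideal.span ({X 3} : Set (R4 k)) :=
    Ideal.mem_span_singleton.2 ⟨-Q, by linear_combination hPQ⟩
  have hP3 : P ∈ Ideal.span ({X 3} : Set (R4 k)) :=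
    ((prime3.mem_or_mem hdvd).resolve_left X2_not_mem3)
  obtain ⟨w, hw⟩ := Ideal.mem_span_singleton'.1 hP3
  have hw' : X 3 * w = P := by rw [← hw]; ring
  have hQ : X 2 * w = -Q := by
    have hz : X 3 * (X 2 * w + Q) = 0 := by linear_combination X 2 * hw' + hPQ
    rcases mul_eq_zero.1 hz with h' | h'
    · exact absurd h' (X_ne_zero _)
    · exact eq_neg_of_add_eq_zero_left h'
  have hwdeg : w ∈ biDeg k 2 0 := biDeg_of_X3_mul (n := 0) (by rw [hw']; exact hP_biDeg)
  exact ⟨w, hwdeg, by rw [hw'], by rw [hQ]⟩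

end Syzygy
section Coeffs

lemma coeff3_CX3 (e : k) : coeff (Finsupp.single 3 1) (C e * X 3 : R4 k) = e := by
  rw [← monomial_eq_C_mul_X, coeff_monomial, if_pos rfl]

lemma coeff3_CX2 (e : k) : coeff (Finsupp.single 3 1) (C e * X 2 : R4 k) = 0 := by
  rw [← monomial_eq_C_mul_X, coeff_monomial, if_neg single23_ne]

lemma coeff2_CX2 (e : k) : coeff (Finsupp.single 2 1) (C e * X 2 : R4 k) = e := by
  rw [← monomial_eq_C_mul_X, coeff_monomial, if_pos rfl]

lemma coeff2_CX3 (e : k) : coeff (Finsupp.single 2 1) (C e * X 3 : R4 k) = 0 := by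
  rw [← monomial_eq_C_mul_X, coeff_monomial, if_neg fun h => single23_ne h.symm]

end Coeffs

lemma forward {p : Fin 4 → R4 k} (hli : LinearIndependent k p)
    (hdeg : ∀ i, p i ∈ biDeg k 2 1)
    (hbpf : (Ideal.span (Set.range p)).radical =
      Ideal.span {X 0, X 1} ⊓ Ideal.span {X 2, X 3})
    (hrank : 2 ≤ Module.rank k ↥(Syz p 0 1)) :
    ∃ q₁ q₂ : R4 k, q₁ ∈ biDeg k 2 0 ∧ q₂ ∈ biDeg k 2 0 ∧
      (Ideal.span {q₁, q₂}).radical = Ideal.span {X 0, X 1} ∧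
      Ideal.span (Set.range p) = Ideal.span {X 2, X 3} ⊓ Ideal.span {q₁, q₂} := by
  obtain ⟨x, y, hxy⟩ := exists_indep_pair hrank
  have hx2 : (x : Fin 4 → R4 k) ∈ Syz p 0 1 := x.2
  have hy2 : (y : Fin 4 → R4 k) ∈ Syz p 0 1 := y.2
  have hpair : ∀ a b : k, a • (x : Fin 4 → R4 k) + b • (y : Fin 4 → R4 k) = 0 →
      a = 0 ∧ b = 0 := by
    intro a b hab
    exact hxy a b (Subtype.ext (by simpa using hab))
  obtain ⟨q1, hq1deg, h1P, h1Q⟩ := syz_extract hdeg hx2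
  obtain ⟨q2, hq2deg, h2P, h2Q⟩ := syz_extract hdeg hy2
  have hcomp1 := (mem_Syz_iff.1 hx2).1
  have hcomp2 := (mem_Syz_iff.1 hy2).1
  -- pair-independence of q1, q2
  have hqpair : ∀ a b : k, a • q1 + b • q2 = 0 → a = 0 ∧ b = 0 := by
    intro a b hab
    have hsumα : ∑ i, (a * coeff (Finsupp.single 2 1) ((x : Fin 4 → R4 k) i)
        + b * coeff (Finsupp.single 2 1) ((y : Fin 4 → R4 k) i)) • p i = 0 := by
      have e : ∑ i, (a * coeff (Finsupp.single 2 1) ((x : Fin 4 → R4 k) i)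
          + b * coeff (Finsupp.single 2 1) ((y : Fin 4 → R4 k) i)) • p i
          = X 3 * (a • q1 + b • q2) := by
        rw [mul_add, mul_smul_comm, mul_smul_comm, h1P, h2P, Finset.smul_sum,
          Finset.smul_sum, ← Finset.sum_add_distrib]
        refine Finset.sum_congr rfl fun i _ => ?_
        rw [add_smul, smul_smul, smul_smul]
      rw [e, hab, mul_zero]
    have hsumβ : ∑ i, (a * coeff (Finsupp.single 3 1) ((x : Fin 4 → R4 k) i)
        + b * coeff (Finsupp.single 3 1) ((y : Fin 4 → R4 k) i)) • p i = 0 := by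
      have e : ∑ i, (a * coeff (Finsupp.single 3 1) ((x : Fin 4 → R4 k) i)
          + b * coeff (Finsupp.single 3 1) ((y : Fin 4 → R4 k) i)) • p i
          = -(X 2 * (a • q1 + b • q2)) := by
        rw [mul_add, mul_smul_comm, mul_smul_comm, h1Q, h2Q, smul_neg, smul_neg,
          neg_add, neg_neg, neg_neg, Finset.smul_sum, Finset.smul_sum,
          ← Finset.sum_add_distrib]
        refine Finset.sum_congr rfl fun i _ => ?_
        rw [add_smul, smul_smul, smul_smul]
      rw [e, hab, mul_zero, neg_zero]
    have hα0 := Fintype.linearIndependent_iff.1 hli _ hsumα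
    have hβ0 := Fintype.linearIndependent_iff.1 hli _ hsumβ
    refine hpair a b ?_
    funext i
    set c1 := coeff (Finsupp.single 2 1) ((x : Fin 4 → R4 k) i) with hc1
    set d1 := coeff (Finsupp.single 3 1) ((x : Fin 4 → R4 k) i) with hd1
    set c2 := coeff (Finsupp.single 2 1) ((y : Fin 4 → R4 k) i) with hc2
    set d2 := coeff (Finsupp.single 3 1) ((y : Fin 4 → R4 k) i) with hd2
    have e1 : (x : Fin 4 → R4 k) i = C c1 * X 2 + C d1 * X 3 := biDeg01 (hcomp1 i)
    have e2 : (y : Fin 4 → R4 k) i = C c2 * X 2 + C d2 * X 3 := biDeg01 (hcomp2 i)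
    show a • (x : Fin 4 → R4 k) i + b • (y : Fin 4 → R4 k) i = 0
    rw [e1, e2, smul_eq_C_mul, smul_eq_C_mul]
    have h1 : a * c1 + b * c2 = 0 := hα0 i
    have h2 : a * d1 + b * d2 = 0 := hβ0 i
    have hC1 : C a * C c1 + C b * C c2 = (0 : R4 k) := by
      rw [← C_mul, ← C_mul, ← C_add, h1, C_0]
    have hC2 : C a * C d1 + C b * C d2 = (0 : R4 k) := by
      rw [← C_mul, ← C_mul, ← C_add, h2, C_0]
    linear_combination X 2 * hC1 + X 3 * hC2
  -- the four products
  set v : Fin 4 → R4 k := ![X 2 * q1, X 3 * q1, X 2 * q2, X 3 * q2] with hv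
  have m2q1 : X 2 * q1 ∈ Submodule.span k (Set.range p) := by
    rw [h1Q]
    exact Submodule.neg_mem _ (Submodule.sum_mem _ fun i _ =>
      Submodule.smul_mem _ _ (Submodule.subset_span ⟨i, rfl⟩))
  have m3q1 : X 3 * q1 ∈ Submodule.span k (Set.range p) := by
    rw [h1P]
    exact Submodule.sum_mem _ fun i _ =>
      Submodule.smul_mem _ _ (Submodule.subset_span ⟨i, rfl⟩)
  have m2q2 : X 2 * q2 ∈ Submodule.span k (Set.range p) := by
    rw [h2Q]
    exact Submodule.neg_mem _ (Submodule.sum_mem _ fun i _ =>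
      Submodule.smul_mem _ _ (Submodule.subset_span ⟨i, rfl⟩))
  have m3q2 : X 3 * q2 ∈ Submodule.span k (Set.range p) := by
    rw [h2P]
    exact Submodule.sum_mem _ fun i _ =>
      Submodule.smul_mem _ _ (Submodule.subset_span ⟨i, rfl⟩)
  have hvmem : ∀ j, v j ∈ Submodule.span k (Set.range p) := by
    intro j
    fin_cases j
    exacts [m2q1, m3q1, m2q2, m3q2]
  have hvli : LinearIndependent k v := by
    rw [Fintype.linearIndependent_iff]
    intro c hc
    rw [Fin.sum_univ_four] at hc
    have hc0 : c 0 • (X 2 * q1) + c 1 • (X 3 * q1) + c 2 • (X 2 * q2)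
        + c 3 • (X 3 * q2) = 0 := hc
    have hc' : X 2 * (c 0 • q1 + c 2 • q2) + X 3 * (c 1 • q1 + c 3 • q2) = 0 := by
      simp only [smul_eq_C_mul] at hc0 ⊢
      linear_combination hc0
    have memA : c 0 • q1 + c 2 • q2 ∈ biDeg k 2 0 :=
      Submodule.add_mem _ (Submodule.smul_mem _ _ hq1deg) (Submodule.smul_mem _ _ hq2deg)
    have memB : c 1 • q1 + c 3 • q2 ∈ biDeg k 2 0 :=
      Submodule.add_mem _ (Submodule.smul_mem _ _ hq1deg) (Submodule.smul_mem _ _ hq2deg)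
    obtain ⟨hA, hB⟩ := eq_zero_of_X2_X3 memA memB hc'
    obtain ⟨h02a, h02b⟩ := hqpair _ _ hA
    obtain ⟨h13a, h13b⟩ := hqpair _ _ hB
    intro j
    fin_cases j
    exacts [h02a, h13a, h02b, h13b]
  haveI : FiniteDimensional k (Submodule.span k (Set.range p)) :=
    FiniteDimensional.span_of_finite _ (Set.finite_range p)
  have hspan : Submodule.span k (Set.range v) = Submodule.span k (Set.range p) := by
    refine Submodule.eq_of_le_of_finrank_le (Submodule.span_le.2 ?_) ?_
    · rintro f ⟨j, rfl⟩
      exact hvmem j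
    · rw [finrank_span_eq_card hli, finrank_span_eq_card hvli]
  have hIeq : Ideal.span (Set.range p) = Ideal.span (Set.range v) := by
    apply le_antisymm <;> rw [Ideal.span_le] <;> rintro f ⟨j, rfl⟩
    · refine SetLike.mem_coe.2 (span_k_le_ideal ?_)
      rw [hspan]
      exact Submodule.subset_span ⟨j, rfl⟩
    · exact SetLike.mem_coe.2 (span_k_le_ideal (hvmem j))
  have hmul : Ideal.span (Set.range v) =
      Ideal.span ({X 2, X 3} : Set (R4 k)) * Ideal.span {q1, q2} := by
    apply le_antisymm
    · rw [Ideal.span_le]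
      rintro f ⟨j, rfl⟩
      fin_cases j <;>
        exact SetLike.mem_coe.2 (Ideal.mul_mem_mul (Ideal.subset_span (by simp))
          (Ideal.subset_span (by simp)))
    · rw [Ideal.mul_le]
      intro r hr s hs
      obtain ⟨ar, br, hr'⟩ := Ideal.mem_span_pair.1 hr
      obtain ⟨as, bs, hs'⟩ := Ideal.mem_span_pair.1 hs
      rw [← hr', ← hs']
      have expand : (ar * X 2 + br * X 3) * (as * q1 + bs * q2)
          = (ar * as) * (X 2 * q1) + (br * as) * (X 3 * q1) + (ar * bs) * (X 2 * q2)
            + (br * bs) * (X 3 * q2) := by ring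
      rw [expand]
      have m0 : X 2 * q1 ∈ Ideal.span (Set.range v) := Ideal.subset_span ⟨0, rfl⟩
      have m1 : X 3 * q1 ∈ Ideal.span (Set.range v) := Ideal.subset_span ⟨1, rfl⟩
      have m2 : X 2 * q2 ∈ Ideal.span (Set.range v) := Ideal.subset_span ⟨2, rfl⟩
      have m3 : X 3 * q2 ∈ Ideal.span (Set.range v) := Ideal.subset_span ⟨3, rfl⟩
      exact add_mem (add_mem (add_mem (Ideal.mul_mem_left _ _ m0)
        (Ideal.mul_mem_left _ _ m1)) (Ideal.mul_mem_left _ _ m2))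
        (Ideal.mul_mem_left _ _ m3)
  have hfinal : Ideal.span (Set.range p) =
      Ideal.span ({X 2, X 3} : Set (R4 k)) ⊓ Ideal.span {q1, q2} := by
    rw [hIeq, hmul, ← inter_mul (fix23 hq1deg) (fix23 hq2deg)]
  have hle_rad : Ideal.span ({X 0, X 1} : Set (R4 k)) ⊓ Ideal.span {X 2, X 3} ≤
      (Ideal.span {q1, q2}).radical := by
    rw [← hbpf]
    apply Ideal.radical_mono
    rw [hfinal]
    exact inf_le_right
  have hX : ∀ j : Fin 4, j = 0 ∨ j = 1 → X j ∈ (Ideal.span {q1, q2}).radical := by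
    intro j hj
    have hmem : (X j * X 2 : R4 k) ∈
        Ideal.span ({X 0, X 1} : Set (R4 k)) ⊓ Ideal.span {X 2, X 3} := by
      refine Ideal.mem_inf.2 ⟨?_, ?_⟩
      · exact Ideal.mul_mem_right _ _ (Ideal.subset_span (by rcases hj with rfl | rfl <;> simp))
      · exact Ideal.mul_mem_left _ _ (Ideal.subset_span (by simp))
    obtain ⟨n, hn⟩ := hle_rad hmem
    refine ⟨n, ?_⟩
    obtain ⟨a, b, hab⟩ := Ideal.mem_span_pair.1 hn
    have happ := congrArg (aeval (gu (k := k))) hab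
    rw [map_add, map_mul, map_mul, fixu hq1deg, fixu hq2deg, map_pow, map_mul,
      aeval_X, aeval_X] at happ
    have hgu2 : (gu (k := k)) 2 = 1 := rfl
    have hguj : (gu (k := k)) j = X j := by rcases hj with rfl | rfl <;> rfl
    rw [hgu2, hguj, mul_one] at happ
    exact Ideal.mem_span_pair.2 ⟨aeval gu a, aeval gu b, happ⟩
  have hrad : (Ideal.span {q1, q2}).radical = Ideal.span ({X 0, X 1} : Set (R4 k)) := by
    apply le_antisymm
    · have h1 : Ideal.span {q1, q2} ≤ Ideal.span ({X 0, X 1} : Set (R4 k)) := by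
        rw [Ideal.span_le]
        rintro f hf
        simp only [Set.mem_insert_iff, Set.mem_singleton_iff] at hf
        rcases hf with rfl | rfl
        exacts [q_mem01 hq1deg, q_mem01 hq2deg]
      exact (Ideal.radical_mono h1).trans_eq prime01.radical
    · rw [Ideal.span_le]
      rintro f hf
      simp only [Set.mem_insert_iff, Set.mem_singleton_iff] at hf
      rcases hf with rfl | rfl
      exacts [hX 0 (Or.inl rfl), hX 1 (Or.inr rfl)]
  exact ⟨q1, q2, hq1deg, hq2deg, hrad, hfinal⟩
lemma not_le_single {p : Fin 4 → R4 k} (hli : LinearIndependent k p)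
    (hdeg : ∀ i, p i ∈ biDeg k 2 1) {q : R4 k} (hq : q ∈ biDeg k 2 0)
    (hle : ∀ i, p i ∈ Ideal.span {q}) : False := by
  have h1 : Submodule.span k (Set.range p) ≤
      Submodule.span k ({X 2 * q, X 3 * q} : Set (R4 k)) := by
    refine Submodule.span_le.2 ?_
    rintro f ⟨i, rfl⟩
    exact piece_single hq (hle i) (hdeg i)
  have e1 : Module.rank k ↥(Submodule.span k (Set.range p)) = 4 := by
    rw [rank_span hli]
    have := Cardinal.mk_range_eq_of_injective hli.injective
    simpa using this
  have e2 : Module.rank k ↥(Submodule.span k ({X 2 * q, X 3 * q} : Set (R4 k))) ≤ 2 := by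
    refine (rank_span_le _).trans ?_
    refine (Cardinal.mk_insert_le).trans ?_
    rw [Cardinal.mk_singleton]
    norm_num
  have hcon := (Submodule.rank_mono h1).trans e2
  rw [e1] at hcon
  norm_num at hcon

lemma backward {p : Fin 4 → R4 k} (hli : LinearIndependent k p)
    (hdeg : ∀ i, p i ∈ biDeg k 2 1) {q1 q2 : R4 k}
    (hq1 : q1 ∈ biDeg k 2 0) (hq2 : q2 ∈ biDeg k 2 0)
    (hIeq : Ideal.span (Set.range p) =
      Ideal.span ({X 2, X 3} : Set (R4 k)) ⊓ Ideal.span {q1, q2}) :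
    2 ≤ Module.rank k ↥(Syz p 0 1) := by
  have hple : ∀ i, p i ∈ Ideal.span ({q1, q2} : Set (R4 k)) := by
    intro i
    have h0 : p i ∈ Ideal.span (Set.range p) := Ideal.subset_span ⟨i, rfl⟩
    rw [hIeq] at h0
    exact (Ideal.mem_inf.1 h0).2
  -- q1, q2 are linearly independent
  have hqpair : ∀ a b : k, a • q1 + b • q2 = 0 → a = 0 ∧ b = 0 := by
    intro a b hab
    by_cases hb : b = 0
    · subst hb
      refine ⟨?_, rfl⟩
      by_contra ha
      rw [zero_smul, add_zero] at hab
      have hq10 : q1 = 0 := by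
        rcases smul_eq_zero.1 hab with h | h
        · exact absurd h ha
        · exact h
      refine not_le_single hli hdeg hq2 fun i => ?_
      have : Ideal.span ({q1, q2} : Set (R4 k)) ≤ Ideal.span {q2} := by
        rw [Ideal.span_le]
        rintro f hf
        simp only [Set.mem_insert_iff, Set.mem_singleton_iff] at hf
        rcases hf with rfl | rfl
        · rw [hq10]; exact Ideal.zero_mem _
        · exact Ideal.subset_span rfl
      exact this (hple i)
    · exfalso
      have hq2eq : q2 = (-(b⁻¹ * a)) • q1 := by
        have hby : b • q2 = -(a • q1) := by
          rw [add_comm] at hab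
          exact eq_neg_of_add_eq_zero_left hab
        calc q2 = b⁻¹ • (b • q2) := by rw [smul_smul, inv_mul_cancel₀ hb, one_smul]
          _ = (-(b⁻¹ * a)) • q1 := by rw [hby, smul_neg, ← mul_smul, neg_smul]
      refine not_le_single hli hdeg hq1 fun i => ?_
      have : Ideal.span ({q1, q2} : Set (R4 k)) ≤ Ideal.span {q1} := by
        rw [Ideal.span_le]
        rintro f hf
        simp only [Set.mem_insert_iff, Set.mem_singleton_iff] at hf
        rcases hf with rfl | rfl
        · exact Ideal.subset_span rfl
        · rw [hq2eq, smul_eq_C_mul]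
          exact Ideal.mul_mem_left _ _ (Ideal.subset_span rfl)
      exact this (hple i)
  -- the four products are in the span of the p i
  have hprod : ∀ (j : Fin 4) (q : R4 k), (j = 2 ∨ j = 3) → q ∈ biDeg k 2 0 →
      q ∈ Ideal.span ({q1, q2} : Set (R4 k)) →
      X j * q ∈ Submodule.span k (Set.range p) := by
    intro j q hj hqd hqmem
    refine piece hdeg ?_ (X_mul_mem_biDeg hj hqd)
    rw [hIeq]
    refine Ideal.mem_inf.2 ⟨?_, Ideal.mul_mem_left _ _ hqmem⟩
    exact Ideal.mul_mem_right _ _ (Ideal.subset_span (by rcases hj with rfl | rfl <;> simp))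
  have hq1mem : q1 ∈ Ideal.span ({q1, q2} : Set (R4 k)) := Ideal.subset_span (by simp)
  have hq2mem : q2 ∈ Ideal.span ({q1, q2} : Set (R4 k)) := Ideal.subset_span (by simp)
  obtain ⟨c1, hc1⟩ := Submodule.mem_span_range_iff_exists_fun k |>.1
    (hprod 2 q1 (Or.inl rfl) hq1 hq1mem)
  obtain ⟨d1, hd1⟩ := Submodule.mem_span_range_iff_exists_fun k |>.1
    (hprod 3 q1 (Or.inr rfl) hq1 hq1mem)
  obtain ⟨c2, hc2⟩ := Submodule.mem_span_range_iff_exists_fun k |>.1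
    (hprod 2 q2 (Or.inl rfl) hq2 hq2mem)
  obtain ⟨d2, hd2⟩ := Submodule.mem_span_range_iff_exists_fun k |>.1
    (hprod 3 q2 (Or.inr rfl) hq2 hq2mem)
  -- build the two syzygies
  have hCX_mem : ∀ (e : k) (j : Fin 4), j = 2 ∨ j = 3 → (C e * X j : R4 k) ∈ biDeg k 0 1 := by
    intro e j hj
    rw [mem_biDeg]
    intro d hd
    rw [← monomial_eq_C_mul_X] at hd
    have := support_monomial_subset hd
    rw [Finset.mem_singleton] at this
    subst this
    rcases hj with rfl | rfl <;> constructor <;> simp [Finsupp.single_apply]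
  have hsyz : ∀ (c d : Fin 4 → k), (∑ i, c i • p i = X 2 * (0:R4 k) + X 2 * 0) → True := fun _ _ _ => trivial
  set ℓ1 : Fin 4 → R4 k := fun i => C (c1 i) * X 3 - C (d1 i) * X 2 with hℓ1
  set ℓ2 : Fin 4 → R4 k := fun i => C (c2 i) * X 3 - C (d2 i) * X 2 with hℓ2
  have hsum : ∀ (c d : Fin 4 → k) (q : R4 k), ∑ i, c i • p i = X 2 * q →
      ∑ i, d i • p i = X 3 * q →
      ∑ i, (C (c i) * X 3 - C (d i) * X 2) * p i = 0 := by
    intro c d q hc hd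
    have e : ∑ i, (C (c i) * X 3 - C (d i) * X 2) * p i
        = X 3 * (∑ i, c i • p i) - X 2 * (∑ i, d i • p i) := by
      rw [Finset.mul_sum, Finset.mul_sum, ← Finset.sum_sub_distrib]
      refine Finset.sum_congr rfl fun i _ => ?_
      rw [smul_eq_C_mul, smul_eq_C_mul]
      ring
    rw [e, hc, hd]
    ring
  have hmem1 : ℓ1 ∈ Syz p 0 1 := by
    rw [mem_Syz_iff]
    constructor
    · intro i
      exact Submodule.sub_mem _ (hCX_mem _ 3 (Or.inr rfl)) (hCX_mem _ 2 (Or.inl rfl))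
    · exact hsum c1 d1 q1 hc1 hd1
  have hmem2 : ℓ2 ∈ Syz p 0 1 := by
    rw [mem_Syz_iff]
    constructor
    · intro i
      exact Submodule.sub_mem _ (hCX_mem _ 3 (Or.inr rfl)) (hCX_mem _ 2 (Or.inl rfl))
    · exact hsum c2 d2 q2 hc2 hd2
  -- pair independence
  have hpair : ∀ a b : k, a • ℓ1 + b • ℓ2 = 0 → a = 0 ∧ b = 0 := by
    intro a b hab
    have hcoeff : ∀ i : Fin 4, a * c1 i + b * c2 i = 0 := by
      intro i
      have hi := congrFun hab i
      have hi' : a • ℓ1 i + b • ℓ2 i = 0 := hi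
      have := congrArg (coeff (Finsupp.single 3 1)) hi'
      rw [coeff_add, coeff_smul, coeff_smul, hℓ1, hℓ2] at this
      simp only [coeff_sub, coeff3_CX3, coeff3_CX2, sub_zero, coeff_zero] at this
      simpa [smul_eq_mul] using this
    have hsum0 : ∑ i, (a * c1 i + b * c2 i) • p i = 0 := by
      refine Finset.sum_eq_zero fun i _ => ?_
      rw [hcoeff i, zero_smul]
    have hX2 : X 2 * (a • q1 + b • q2) = 0 := by
      have e : X 2 * (a • q1 + b • q2) = ∑ i, (a * c1 i + b * c2 i) • p i := by
        rw [mul_add, mul_smul_comm, mul_smul_comm, ← hc1, ← hc2, Finset.smul_sum,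
          Finset.smul_sum, ← Finset.sum_add_distrib]
        refine (Finset.sum_congr rfl fun i _ => ?_)
        rw [add_smul, smul_smul, smul_smul]
      rw [e, hsum0]
    have hq0 : a • q1 + b • q2 = 0 := by
      rcases mul_eq_zero.1 hX2 with h | h
      · exact absurd h (X_ne_zero _)
      · exact h
    exact hqpair a b hq0
  exact two_le_rank_of_pair (x := (⟨ℓ1, hmem1⟩ : ↥(Syz p 0 1))) (y := ⟨ℓ2, hmem2⟩)
    (fun a b hab => hpair a b (by
      have := congrArg (Subtype.val) hab
      simpa using this))

end St5

/-- For U basepoint free, dim Syz_{(0,1)} ≥ 2 iff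
I_U = ⟨u,v⟩ ∩ ⟨q₁,q₂⟩ with q₁, q₂ of bidegree (2,0) and √⟨q₁,q₂⟩ = ⟨s,t⟩. -/
theorem statement5 {k : Type*} [Field k] [IsAlgClosed k]
    (p : Fin 4 → MvPolynomial (Fin 4) k)
    (hli : LinearIndependent k p)
    (hdeg : ∀ i, p i ∈ biDeg k 2 1)
    (hbpf : (Ideal.span (Set.range p)).radical =
      Ideal.span {X 0, X 1} ⊓ Ideal.span {X 2, X 3}) :
    2 ≤ Module.rank k ↥(Syz p 0 1) ↔
      ∃ q₁ q₂ : MvPolynomial (Fin 4) k, q₁ ∈ biDeg k 2 0 ∧ q₂ ∈ biDeg k 2 0 ∧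
        (Ideal.span {q₁, q₂}).radical = Ideal.span {X 0, X 1} ∧
        Ideal.span (Set.range p) = Ideal.span {X 2, X 3} ⊓ Ideal.span {q₁, q₂} := by
  constructor
  · intro h
    exact St5.forward hli hdeg hbpf h
  · rintro ⟨q1, q2, h1, h2, h3, h4⟩
    exact St5.backward hli hdeg h1 h2 h4
end
end
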